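/- arXiv:1806.00596 — 7 statements merged into one kernel-verified Lean document; each statement's English description precedes it below -/
import Mathlib

section
/- If m ≥ 2 is an integer and x ≥ 0, y are real numbers such that |y|/x ≤ 2^{1/(m-1)} - 1 and x + y ≥ 0, then x^m - 2m x^{m-1}|y| ≤ (x+y)^m ≤ x^m + 2m x^{m-1}|y|. -/
lemma pow_sub_pow_le_aux (m : ℕ) (a b : ℝ) (hb : 0 ≤ b) (hba : b ≤ a) :
    a ^ m - b ^ m ≤ m * a ^ (m - 1) * (a - b) := by
  have ha : 0 ≤ a := hb.trans hba
  have hgeom := geom_sum₂_mul a b m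
  rw [← hgeom]
  have hsum : (∑ i ∈ Finset.range m, a ^ i * b ^ (m - 1 - i)) ≤ m * a ^ (m - 1) := by
    calc (∑ i ∈ Finset.range m, a ^ i * b ^ (m - 1 - i))
        ≤ ∑ i ∈ Finset.range m, a ^ (m - 1) := by
          apply Finset.sum_le_sum
          intro i hi
          simp only [Finset.mem_range] at hi
          calc a ^ i * b ^ (m - 1 - i) ≤ a ^ i * a ^ (m - 1 - i) := by
                apply mul_le_mul_of_nonneg_left (pow_le_pow_left₀ hb hba _) (pow_nonneg ha _)
            _ = a ^ (i + (m - 1 - i)) := (pow_add a i (m - 1 - i)).symm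
            _ = a ^ (m - 1) := by congr 1; omega
      _ = m * a ^ (m - 1) := by simp [Finset.sum_const, nsmul_eq_mul]
  have hab : 0 ≤ a - b := sub_nonneg.mpr hba
  exact mul_le_mul_of_nonneg_right hsum hab

/-- If `m ≥ 2` and `x > 0`, `y` real with `|y|/x ≤ 2^(1/(m-1)) - 1` and `x + y ≥ 0`, then
`x^m - 2m x^(m-1) |y| ≤ (x+y)^m ≤ x^m + 2m x^(m-1) |y|`. -/
theorem pow_add_bounds (m : ℕ) (hm : 2 ≤ m) (x y : ℝ) (hx : 0 < x) (hxy : 0 ≤ x + y)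
    (h : |y| ≤ x * (2 ^ ((1 : ℝ) / ((m : ℝ) - 1)) - 1)) :
    x ^ m - 2 * m * x ^ (m - 1) * |y| ≤ (x + y) ^ m ∧
      (x + y) ^ m ≤ x ^ m + 2 * m * x ^ (m - 1) * |y| := by
  have hy : 0 ≤ |y| := abs_nonneg y
  have hm1 : (1 : ℝ) ≤ (m : ℝ) - 1 := by
    have : (2 : ℝ) ≤ m := by exact_mod_cast hm
    linarith
  have hm1pos : (0 : ℝ) < (m : ℝ) - 1 := by linarith
  -- 2^(1/(m-1)) ≤ 2
  have hr1 : (2 : ℝ) ^ ((1 : ℝ) / ((m : ℝ) - 1)) ≤ 2 := by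
    have := Real.rpow_le_rpow_of_exponent_le (x := 2) (by norm_num)
      (show (1 : ℝ) / ((m : ℝ) - 1) ≤ 1 by
        rw [div_le_one hm1pos]; linarith)
    simpa using this
  have hyx : |y| ≤ x := by
    calc |y| ≤ x * (2 ^ ((1 : ℝ) / ((m : ℝ) - 1)) - 1) := h
      _ ≤ x * 1 := by
          apply mul_le_mul_of_nonneg_left _ hx.le
          linarith
      _ = x := mul_one x
  -- (x + |y|)^(m-1) ≤ 2 * x^(m-1)
  have hcast : ((m - 1 : ℕ) : ℝ) = (m : ℝ) - 1 := by
    have h1 : 1 ≤ m := by omega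
    push_cast [Nat.cast_sub h1]; ring
  have hkey : (x + |y|) ^ (m - 1) ≤ 2 * x ^ (m - 1) := by
    have hle : x + |y| ≤ x * 2 ^ ((1 : ℝ) / ((m : ℝ) - 1)) := by linarith
    have hxy0 : 0 ≤ x + |y| := by linarith
    calc (x + |y|) ^ (m - 1) ≤ (x * 2 ^ ((1 : ℝ) / ((m : ℝ) - 1))) ^ (m - 1) :=
          pow_le_pow_left₀ hxy0 hle _
      _ = x ^ (m - 1) * (2 ^ ((1 : ℝ) / ((m : ℝ) - 1))) ^ (m - 1) := mul_pow _ _ _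
      _ = 2 * x ^ (m - 1) := by
          rw [← Real.rpow_natCast ((2 : ℝ) ^ ((1 : ℝ) / ((m : ℝ) - 1))) (m - 1),
            ← Real.rpow_mul (by norm_num : (0:ℝ) ≤ 2), hcast]
          rw [div_mul_cancel₀ 1 (ne_of_gt hm1pos)]
          simp [mul_comm]
  constructor
  · -- lower bound
    have h1 : (x - |y|) ^ m ≤ (x + y) ^ m :=
      pow_le_pow_left₀ (by linarith) (by cases abs_cases y with
        | inl hc => linarith [hc.1]
        | inr hc => linarith [hc.1]) _
    have h2 : x ^ m - (x - |y|) ^ m ≤ m * x ^ (m - 1) * (x - (x - |y|)) :=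
      pow_sub_pow_le_aux m x (x - |y|) (by linarith) (by linarith)
    have h3 : x - (x - |y|) = |y| := by ring
    rw [h3] at h2
    nlinarith [pow_nonneg hx.le (m - 1), mul_nonneg (mul_nonneg (Nat.cast_nonneg m) (pow_nonneg hx.le (m-1))) hy]
  · -- upper bound
    have h1 : (x + y) ^ m ≤ (x + |y|) ^ m :=
      pow_le_pow_left₀ hxy (by cases abs_cases y with
        | inl hc => linarith [hc.1]
        | inr hc => linarith [hc.1]) _
    have h2 : (x + |y|) ^ m - x ^ m ≤ m * (x + |y|) ^ (m - 1) * ((x + |y|) - x) :=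
      pow_sub_pow_le_aux m (x + |y|) x hx.le (by linarith)
    have h3 : (x + |y|) - x = |y| := by ring
    rw [h3] at h2
    have h4 : (m : ℝ) * (x + |y|) ^ (m - 1) * |y| ≤ (m : ℝ) * (2 * x ^ (m - 1)) * |y| := by
      apply mul_le_mul_of_nonneg_right _ hy
      exact mul_le_mul_of_nonneg_left hkey (Nat.cast_nonneg m)
    nlinarith
end

section
/- Let k, l, n be positive integers, T > 0, and M an l×k integer matrix with entries of absolute value at most n^T. If p is a prime larger than e^{(k log k)/2 + kT log n}, then the kernel of M : ℤ^k → ℤ^l surjects onto the kernel of the reduced map M : (ℤ/pℤ)^k → (ℤ/pℤ)^l under reduction mod p. -/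
open Finset Matrix

/-- Hadamard-type bound: an `r × r` real matrix with entries bounded by `x` has
`|det| ≤ (√r · x)^r`. -/
lemma hadamard_det_le {r : ℕ} (A : Matrix (Fin r) (Fin r) ℝ) {x : ℝ} (hx : 0 ≤ x)
    (h : ∀ i j, |A i j| ≤ x) : |A.det| ≤ (Real.sqrt r * x) ^ r := by
  classical
  haveI : Fact (Module.finrank ℝ (EuclideanSpace ℝ (Fin r)) = r) := ⟨finrank_euclideanSpace_fin⟩
  set b : OrthonormalBasis (Fin r) ℝ (EuclideanSpace ℝ (Fin r)) :=
    EuclideanSpace.basisFun (Fin r) ℝ with hb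
  let o : Orientation ℝ (EuclideanSpace ℝ (Fin r)) (Fin r) := b.toBasis.orientation
  let v : Fin r → EuclideanSpace ℝ (Fin r) := fun i => (WithLp.equiv 2 _).symm (A i)
  have hM2 : b.toBasis.toMatrix v = Aᵀ := by
    ext i j
    rw [Module.Basis.toMatrix_apply, b.coe_toBasis_repr_apply]
    simp [hb, EuclideanSpace.basisFun_repr, v, Matrix.transpose_apply]
  have hdet : |A.det| = |o.volumeForm v| := by
    calc |A.det| = |(b.toBasis.toMatrix v).det| := by rw [hM2, Matrix.det_transpose]
      _ = |b.toBasis.det v| := by rw [Module.Basis.det_apply]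
      _ = |o.volumeForm v| := (o.volumeForm_robust' b v).symm
  rw [hdet]
  refine (o.abs_volumeForm_apply_le v).trans ?_
  have hnorm : ∀ i, ‖v i‖ ≤ Real.sqrt r * x := by
    intro i
    rw [EuclideanSpace.norm_eq]
    have h1 : ∑ j, ‖(v i) j‖ ^ 2 ≤ ∑ _j : Fin r, x ^ 2 := by
      refine Finset.sum_le_sum fun j _ => ?_
      have : ‖(v i) j‖ = |A i j| := rfl
      rw [this]
      have := h i j
      nlinarith [abs_nonneg (A i j)]
    refine (Real.sqrt_le_sqrt h1).trans ?_
    rw [Finset.sum_const, Finset.card_univ, Fintype.card_fin, nsmul_eq_mul,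
      Real.sqrt_mul (by positivity), Real.sqrt_sq hx]
  calc ∏ i, ‖v i‖ ≤ ∏ _i : Fin r, (Real.sqrt r * x) :=
        Finset.prod_le_prod (fun i _ => norm_nonneg _) (fun i _ => hnorm i)
    _ = (Real.sqrt r * x) ^ r := by simp

/-- From a matrix over a field, one can select `A.rank` columns that are linearly
independent and span the column space. -/
lemma exists_independent_cols {F : Type*} [Field F] {l k r : ℕ}
    (A : Matrix (Fin l) (Fin k) F) (hr : A.rank = r) :
    ∃ t : Fin r → Fin k, LinearIndependent F (fun i => Aᵀ (t i)) ∧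
      Submodule.span F (Set.range fun i => Aᵀ (t i)) = Submodule.span F (Set.range Aᵀ) := by
  classical
  obtain ⟨b, hbsub, hbspan, hbind⟩ := exists_linearIndependent F (Set.range Aᵀ)
  have hfin : b.Finite := hbind.setFinite
  haveI := hfin.fintype
  have hcard : Fintype.card b = r := by
    rw [← Set.toFinset_card, ← finrank_span_set_eq_card hbind, hbspan]
    exact (Matrix.rank_eq_finrank_span_cols A).symm.trans hr
  let e : Fin r ≃ b := (Fintype.equivFinOfCardEq hcard).symm
  have hchoice : ∀ x : b, ∃ j, Aᵀ j = (x : Fin l → F) := fun x => hbsub x.2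
  choose t ht using fun i : Fin r => hchoice (e i)
  have hfam : (fun i => Aᵀ (t i)) = (Subtype.val ∘ e) := funext fun i => ht i
  refine ⟨t, ?_, ?_⟩
  · rw [hfam]
    exact hbind.comp e e.injective
  · rw [hfam, Set.range_comp, e.surjective.range_eq, Set.image_univ, Subtype.range_coe, hbspan]

/-- A matrix over a field has an invertible square submatrix of size its rank. -/
lemma exists_submatrix_det_ne_zero {F : Type*} [Field F] {l k : ℕ}
    (A : Matrix (Fin l) (Fin k) F) :
    ∃ (s : Fin A.rank → Fin l) (t : Fin A.rank → Fin k), (A.submatrix s t).det ≠ 0 := by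
  classical
  obtain ⟨t, htind, htspan⟩ := exists_independent_cols A rfl
  set B : Matrix (Fin l) (Fin A.rank) F := A.submatrix id t with hB
  have hBT : Bᵀ = fun i => Aᵀ (t i) := by
    ext i j; rfl
  have hBrank : B.rank = A.rank := by
    rw [Matrix.rank_eq_finrank_span_cols B]
    change Module.finrank F (Submodule.span F (Set.range Bᵀ)) = A.rank
    rw [hBT, htspan]
    exact (Matrix.rank_eq_finrank_span_cols A).symm
  have hCrank : Bᵀ.rank = A.rank := by rw [Matrix.rank_transpose, hBrank]
  obtain ⟨s, hsind, -⟩ := exists_independent_cols Bᵀ hCrank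
  refine ⟨s, t, ?_⟩
  have hrows : LinearIndependent F (fun i => (A.submatrix s t) i) := by
    have : (fun i => (A.submatrix s t) i) = (fun i => Bᵀᵀ (s i)) := by
      ext i j; rfl
    rw [this]
    exact hsind
  intro hdet
  obtain ⟨vv, hvv0, hvmul⟩ := (Matrix.exists_vecMul_eq_zero_iff).2 hdet
  refine hvv0 ?_
  have := Fintype.linearIndependent_iff.1 hrows vv ?_
  · exact funext this
  · funext j
    have := congrFun hvmul j
    simpa [Matrix.vecMul, dotProduct, Finset.sum_apply] using this

/-- Reduction of `mulVec` along an integer cast. -/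
lemma mulVec_map_cast {l k : ℕ} {S : Type*} [CommRing S]
    (M : Matrix (Fin l) (Fin k) ℤ) (u : Fin k → ℤ) :
    (M.map (Int.cast : ℤ → S)).mulVec (fun j => ((u j : S)))
      = fun i => ((M.mulVec u i : S)) := by
  funext i
  simp only [Matrix.mulVec, dotProduct, Matrix.map_apply, ← Int.cast_mul, ← Int.cast_sum]

lemma cast_sum_smul {m k : ℕ} {S : Type*} [CommRing S]
    (w : Fin m → (Fin k → ℤ)) (a : Fin m → ℤ) :
    (fun j => (((∑ i, a i • w i) j : ℤ) : S)) = ∑ i, ((a i : S)) • (fun j => ((w i j : S))) := by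
  funext j
  simp [Finset.sum_apply, Pi.smul_apply, smul_eq_mul, Int.cast_sum, Int.cast_mul]

lemma det_cast {r : ℕ} {S : Type*} [CommRing S] (Z : Matrix (Fin r) (Fin r) ℤ) :
    ((Z.det : ℤ) : S) = (Z.map (Int.cast : ℤ → S)).det := by
  have h := RingHom.map_det (Int.castRingHom S) Z
  simpa using h

/-- For an `l × k` integer matrix `M` with entries bounded by `n^T` in absolute value, and a
prime `p > exp((k log k)/2 + kT log n)`, the kernel of `M : ℤ^k → ℤ^l` surjects onto the
kernel of the reduction `M : (ℤ/pℤ)^k → (ℤ/pℤ)^l`. -/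
theorem kernel_surjects_mod_large_prime {k l n : ℕ} (hk : 0 < k) (hl : 0 < l) (hn : 0 < n)
    (T : ℝ) (hT : 0 < T) (M : Matrix (Fin l) (Fin k) ℤ)
    (hM : ∀ i j, (|M i j| : ℝ) ≤ (n : ℝ) ^ T)
    (p : ℕ) [Fact p.Prime]
    (hp : Real.exp ((k * Real.log k) / 2 + k * T * Real.log n) < p) :
    ∀ v : Fin k → ZMod p, (M.map (Int.cast : ℤ → ZMod p)).mulVec v = 0 →
      ∃ w : Fin k → ℤ, M.mulVec w = 0 ∧ (fun i => ((w i : ZMod p))) = v := by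
  classical
  intro v hv
  have hppos : 0 < p := (Fact.out : p.Prime).pos
  set K := LinearMap.ker (Matrix.mulVecLin M) with hK
  obtain ⟨m, b⟩ := Submodule.basisOfPid (Pi.basisFun ℤ (Fin k)) K
  set w : Fin m → (Fin k → ℤ) := fun i => ((b i : K) : Fin k → ℤ) with hwdef
  have hw : ∀ i, M.mulVec (w i) = 0 := by
    intro i
    have h2 : M.mulVecLin (w i) = 0 := LinearMap.mem_ker.mp (b i).2
    rwa [Matrix.mulVecLin_apply] at h2
  -- membership in K gives an expansion in the basis
  have hmemK : ∀ u : Fin k → ℤ, M.mulVec u = 0 → ∃ a : Fin m → ℤ, u = ∑ i, a i • w i := by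
    intro u hu
    have huK : u ∈ K := LinearMap.mem_ker.mpr (by rw [Matrix.mulVecLin_apply]; exact hu)
    refine ⟨fun i => b.repr ⟨u, huK⟩ i, ?_⟩
    have h1 := b.sum_repr ⟨u, huK⟩
    calc u = K.subtype ⟨u, huK⟩ := rfl
      _ = K.subtype (∑ i, b.repr ⟨u, huK⟩ i • b i) := by rw [h1]
      _ = ∑ i, b.repr ⟨u, huK⟩ i • w i := by
          rw [map_sum]
          exact Finset.sum_congr rfl fun i _ => by rw [_root_.map_smul]; rfl
  -- ℤ-linear independence of w
  have hindZ : LinearIndependent ℤ w := by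
    have := b.linearIndependent.map' K.subtype K.ker_subtype
    exact this
  -- kernel combinations are in the kernel
  have hcomb : ∀ a : Fin m → ℤ, M.mulVec (∑ i, a i • w i) = 0 := by
    intro a
    have : M.mulVecLin (∑ i, a i • w i) = 0 := by
      rw [map_sum]
      refine Finset.sum_eq_zero fun i _ => ?_
      rw [LinearMap.map_smul, Matrix.mulVecLin_apply, hw i, smul_zero]
    rwa [Matrix.mulVecLin_apply] at this
  -- saturation
  have hsat : ∀ u : Fin k → ℤ, M.mulVec ((p : ℤ) • u) = 0 → M.mulVec u = 0 := by
    intro u hu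
    rw [Matrix.mulVec_smul] at hu
    funext i
    have := congrFun hu i
    simp only [Pi.smul_apply, smul_eq_mul, Pi.zero_apply] at this ⊢
    rcases mul_eq_zero.1 this with h | h
    · exact absurd h (by exact_mod_cast hppos.ne')
    · exact h
  -- reductions mod p
  set Mp := M.map (Int.cast : ℤ → ZMod p) with hMp
  set wbar : Fin m → (Fin k → ZMod p) := fun i j => ((w i j : ZMod p)) with hwbar
  have hvalcast : ∀ g : ZMod p, (((g.val : ℤ)) : ZMod p) = g := by
    intro g
    push_cast
    simp [ZMod.natCast_val, ZMod.cast_id]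
  have hwbar_ker : ∀ i, Mp.mulVec (wbar i) = 0 := by
    intro i
    rw [hMp, hwbar, mulVec_map_cast M (w i)]
    funext j
    simp [hw i]
  -- independence of the reductions
  have hindp : LinearIndependent (ZMod p) wbar := by
    rw [Fintype.linearIndependent_iff]
    intro g hg
    set a : Fin m → ℤ := fun i => ((g i).val : ℤ) with ha
    have hcast : (fun j => (((∑ i, a i • w i) j : ℤ) : ZMod p)) = 0 := by
      rw [cast_sum_smul]
      have h5 : ∀ i, ((a i : ZMod p)) = g i := fun i => hvalcast (g i)
      calc (∑ i, ((a i : ZMod p)) • fun j => ((w i j : ZMod p)))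
          = ∑ i, g i • wbar i := by
            refine Finset.sum_congr rfl fun i _ => ?_
            rw [h5 i]
        _ = 0 := hg
    have hdvd : ∀ j, (p : ℤ) ∣ (∑ i, a i • w i) j := by
      intro j
      have h9 := congrFun hcast j
      rw [Pi.zero_apply] at h9
      exact (ZMod.intCast_zmod_eq_zero_iff_dvd _ p).1 h9
    choose u' hu' using hdvd
    have hsum : (∑ i, a i • w i) = (p : ℤ) • u' := by
      funext j
      simpa using hu' j
    have hu'0 : M.mulVec u' = 0 := hsat u' (by rw [← hsum]; exact hcomb a)
    obtain ⟨d, hd⟩ := hmemK u' hu'0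
    have hzero : ∑ i, (a i - (p : ℤ) * d i) • w i = 0 := by
      have : (∑ i, a i • w i) - (∑ i, ((p : ℤ) * d i) • w i) = 0 := by
        rw [hsum, hd, Finset.smul_sum]
        rw [sub_eq_zero]
        refine Finset.sum_congr rfl fun i _ => ?_
        rw [smul_smul]
      rw [← this, ← Finset.sum_sub_distrib]
      refine Finset.sum_congr rfl fun i _ => ?_
      rw [sub_smul]
    have hai := Fintype.linearIndependent_iff.1 hindZ _ hzero
    intro i
    have : a i = (p : ℤ) * d i := by have := hai i; linarith
    have : g i = (((p : ℤ) * d i : ℤ) : ZMod p) := by rw [← this, ha]; exact (hvalcast (g i)).symm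
    rw [this]
    push_cast
    simp
  -- the ℚ matrix and its rank
  set Q := M.map (Int.cast : ℤ → ℚ) with hQ
  set wQ : Fin m → (Fin k → ℚ) := fun i j => ((w i j : ℚ)) with hwQ
  have hwQ_ker : ∀ i, wQ i ∈ LinearMap.ker Q.mulVecLin := by
    intro i
    rw [LinearMap.mem_ker, Matrix.mulVecLin_apply, hQ, hwQ,
      mulVec_map_cast M (w i)]
    funext j
    simp [hw i]
  have hindQ : LinearIndependent ℚ wQ := by
    rw [Fintype.linearIndependent_iff]
    intro q hq
    obtain ⟨dd, hdd⟩ := IsLocalization.exist_integer_multiples (nonZeroDivisors ℤ)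
      Finset.univ q
    choose a haa using fun i => hdd i (Finset.mem_univ i)
    have haq : ∀ i, (a i : ℚ) = ((dd : ℤ) : ℚ) * q i := by
      intro i
      have := haa i
      simpa [Algebra.smul_def, zsmul_eq_mul] using this
    have hcast : (fun j => (((∑ i, a i • w i) j : ℤ) : ℚ)) = 0 := by
      rw [cast_sum_smul]
      have : (∑ i, ((a i : ℚ)) • fun j => ((w i j : ℚ)))
          = ((dd : ℤ) : ℚ) • ∑ i, q i • wQ i := by
        rw [Finset.smul_sum]
        refine Finset.sum_congr rfl fun i _ => ?_
        funext j
        simp only [Pi.smul_apply, smul_eq_mul, eq_intCast, Int.cast_id]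
        rw [haq i]
        ring
      rw [this, hq, smul_zero]
    have hzero : (∑ i, a i • w i) = 0 := by
      funext j
      have h9 := congrFun hcast j
      rw [Pi.zero_apply] at h9
      exact_mod_cast h9
    have hai := Fintype.linearIndependent_iff.1 hindZ _ hzero
    intro i
    have h1 : ((dd : ℤ) : ℚ) * q i = 0 := by rw [← haq i, hai i]; simp
    have hdd0 : ((dd : ℤ) : ℚ) ≠ 0 := by
      exact_mod_cast nonZeroDivisors.coe_ne_zero dd
    exact (mul_eq_zero.1 h1).resolve_left hdd0
  have hkerQ : LinearMap.ker Q.mulVecLin = Submodule.span ℚ (Set.range wQ) := by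
    refine le_antisymm ?_ ?_
    · intro x hx
      rw [LinearMap.mem_ker, Matrix.mulVecLin_apply] at hx
      obtain ⟨dd, hdd⟩ := IsLocalization.exist_integer_multiples (nonZeroDivisors ℤ)
        Finset.univ x
      choose u hu using fun j => hdd j (Finset.mem_univ j)
      have hux : ∀ j, (u j : ℚ) = ((dd : ℤ) : ℚ) * x j := by
        intro j
        have := hu j
        simpa [Algebra.smul_def, zsmul_eq_mul] using this
      have hu0 : M.mulVec u = 0 := by
        have h1 : Q.mulVec (fun j => ((u j : ℚ))) = 0 := by
          have : (fun j => ((u j : ℚ))) = ((dd : ℤ) : ℚ) • x := by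
            funext j; rw [hux j]; rfl
          rw [this, Matrix.mulVec_smul, hx, smul_zero]
        rw [hQ, mulVec_map_cast M u] at h1
        funext i
        have h9 := congrFun h1 i
        rw [Pi.zero_apply] at h9
        exact_mod_cast h9
      obtain ⟨a, haa⟩ := hmemK u hu0
      have hdd0 : ((dd : ℤ) : ℚ) ≠ 0 := by exact_mod_cast nonZeroDivisors.coe_ne_zero dd
      have hxeq : x = ∑ i, (((dd : ℤ) : ℚ)⁻¹ * (a i : ℚ)) • wQ i := by
        funext j
        have h2 : (u j : ℚ) = ∑ i, (a i : ℚ) * (w i j : ℚ) := by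
          rw [haa]
          push_cast [Finset.sum_apply, Pi.smul_apply, smul_eq_mul]
          rfl
        have h3 := hux j
        rw [h2] at h3
        have : x j = ((dd : ℤ) : ℚ)⁻¹ * ∑ i, (a i : ℚ) * (w i j : ℚ) := by
          field_simp at h3 ⊢
          linarith [h3]
        rw [this, Finset.mul_sum, Finset.sum_apply]
        refine Finset.sum_congr rfl fun i _ => ?_
        simp only [Pi.smul_apply, smul_eq_mul, hwQ]
        ring
      rw [hxeq]
      exact Submodule.sum_mem _ fun i _ =>
        Submodule.smul_mem _ _ (Submodule.subset_span ⟨i, rfl⟩)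
    · rw [Submodule.span_le]
      rintro x ⟨i, rfl⟩
      exact hwQ_ker i
  have hrankQ : Q.rank + m = k := by
    have hkerfr : Module.finrank ℚ ↥(LinearMap.ker Q.mulVecLin) = m := by
      have hc := congrArg (fun S : Submodule ℚ (Fin k → ℚ) => Module.finrank ℚ (↥S)) hkerQ
      exact hc.trans ((finrank_span_eq_card hindQ).trans (Fintype.card_fin m))
    have h1 := LinearMap.finrank_range_add_finrank_ker Q.mulVecLin
    rw [hkerfr] at h1
    simpa [Matrix.rank, Module.finrank_fin_fun, Fintype.card_fin] using h1
  set r := Q.rank with hr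
  have hrk : r ≤ k := by omega
  -- extract an invertible r × r submatrix over ℚ
  obtain ⟨s, t, hst⟩ := exists_submatrix_det_ne_zero Q
  set Z := M.submatrix s t with hZ
  have hZQ : (Z.map (Int.cast : ℤ → ℚ)).det = (Q.submatrix s t).det := by
    show ((M.submatrix s t).map (Int.cast : ℤ → ℚ)).det
      = ((M.map (Int.cast : ℤ → ℚ)).submatrix s t).det
    rw [Matrix.submatrix_map]
  have hZdet : Z.det ≠ 0 := by
    intro h0
    apply hst
    rw [← hZQ, ← det_cast, h0]
    simp
  -- Hadamard bound on Z
  have hbound : |((Z.det : ℤ) : ℝ)| ≤ (Real.sqrt r * (n : ℝ) ^ T) ^ r := by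
    have := hadamard_det_le (Z.map (Int.cast : ℤ → ℝ))
      (x := (n : ℝ) ^ T) (by positivity) ?_
    · rwa [det_cast]
    · intro i j
      have := hM (s i) (t j)
      simpa [hZ, Matrix.map_apply, Matrix.submatrix_apply] using this
  have hlek : (Real.sqrt r * (n : ℝ) ^ T) ^ r ≤
      Real.exp ((k * Real.log k) / 2 + k * T * Real.log n) := by
    have hn1 : (1 : ℝ) ≤ (n : ℝ) := by exact_mod_cast hn
    have hk1 : (1 : ℝ) ≤ (k : ℝ) := by exact_mod_cast hk
    have hnT1 : (1 : ℝ) ≤ (n : ℝ) ^ T := Real.one_le_rpow hn1 hT.le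
    have hrr : (Real.sqrt r * (n : ℝ) ^ T) ^ r
        = (r : ℝ) ^ ((r : ℝ) / 2) * (n : ℝ) ^ (T * r) := by
      rw [mul_pow, Real.sqrt_eq_rpow, ← Real.rpow_natCast ((r : ℝ) ^ ((1:ℝ)/2)) r,
        ← Real.rpow_mul (Nat.cast_nonneg r), ← Real.rpow_natCast ((n : ℝ) ^ T) r,
        ← Real.rpow_mul (Nat.cast_nonneg n)]
      ring_nf
    rw [hrr, Real.exp_add]
    have he1 : Real.exp ((k : ℝ) * Real.log k / 2) = (k : ℝ) ^ ((k : ℝ) / 2) := by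
      rw [Real.rpow_def_of_pos (by linarith : (0:ℝ) < k)]
      ring_nf
    have he2 : Real.exp ((k : ℝ) * T * Real.log n) = (n : ℝ) ^ (T * (k : ℝ)) := by
      rw [Real.rpow_def_of_pos (by linarith : (0:ℝ) < n)]
      ring_nf
    rw [he1, he2]
    have h1 : (r : ℝ) ^ ((r : ℝ) / 2) ≤ (k : ℝ) ^ ((k : ℝ) / 2) := by
      rcases Nat.eq_zero_or_pos r with h | h
      · rw [h]
        simp only [Nat.cast_zero, zero_div, Real.rpow_zero]
        exact Real.one_le_rpow hk1 (by positivity)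
      · have hrk' : (r : ℝ) ≤ (k : ℝ) := by exact_mod_cast hrk
        calc (r : ℝ) ^ ((r : ℝ) / 2) ≤ (k : ℝ) ^ ((r : ℝ) / 2) :=
              Real.rpow_le_rpow (Nat.cast_nonneg r) hrk' (by positivity)
          _ ≤ (k : ℝ) ^ ((k : ℝ) / 2) :=
              Real.rpow_le_rpow_of_exponent_le hk1 (by linarith)
    have h2 : (n : ℝ) ^ (T * (r : ℝ)) ≤ (n : ℝ) ^ (T * (k : ℝ)) := by
      refine Real.rpow_le_rpow_of_exponent_le hn1 ?_
      have hrk' : (r : ℝ) ≤ (k : ℝ) := by exact_mod_cast hrk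
      nlinarith
    have hpos1 : (0 : ℝ) ≤ (r : ℝ) ^ ((r : ℝ) / 2) := Real.rpow_nonneg (Nat.cast_nonneg r) _
    have hpos2 : (0 : ℝ) ≤ (n : ℝ) ^ (T * (r : ℝ)) := Real.rpow_nonneg (Nat.cast_nonneg n) _
    exact mul_le_mul h1 h2 hpos2 (Real.rpow_nonneg (Nat.cast_nonneg k) _)
  -- det Z is nonzero mod p
  have hZp : ((Z.det : ℤ) : ZMod p) ≠ 0 := by
    intro h0
    have hdvd : (p : ℤ) ∣ Z.det := (ZMod.intCast_zmod_eq_zero_iff_dvd _ _).1 h0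
    have hle : (p : ℤ) ≤ |Z.det| := Int.le_of_dvd (abs_pos.2 hZdet) ((dvd_abs _ _).2 hdvd)
    have : (p : ℝ) ≤ |((Z.det : ℤ) : ℝ)| := by
      rw [← Int.cast_abs]
      exact_mod_cast hle
    have := this.trans (hbound.trans hlek)
    linarith
  -- so Mp has rank at least r
  have hMpsub : (Mp.submatrix s t).det ≠ 0 := by
    have : (Mp.submatrix s t).det = ((Z.det : ℤ) : ZMod p) := by
      rw [det_cast]
      show ((M.map (Int.cast : ℤ → ZMod p)).submatrix s t).det
        = ((M.submatrix s t).map (Int.cast : ℤ → ZMod p)).det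
      rw [Matrix.submatrix_map]
    rw [this]
    exact hZp
  have hrankMp : r ≤ Mp.rank := by
    have hunit : IsUnit (Mp.submatrix s t) :=
      (Matrix.isUnit_iff_isUnit_det _).2 (isUnit_iff_ne_zero.2 hMpsub)
    have h1 : (Mp.submatrix s t).rank = r := by
      rw [Matrix.rank_of_isUnit _ hunit, Fintype.card_fin]
    have h2 : Mp.submatrix s t =
        ((1 : Matrix (Fin l) (Fin l) (ZMod p)).submatrix s id * Mp)
          * (1 : Matrix (Fin k) (Fin k) (ZMod p)).submatrix id t := by
      have ha : (1 : Matrix (Fin l) (Fin l) (ZMod p)).submatrix s id * Mp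
          = Mp.submatrix s id := by
        have := Matrix.submatrix_mul (1 : Matrix (Fin l) (Fin l) (ZMod p)) Mp
          s id id Function.bijective_id
        simpa using this.symm
      have hbb : Mp.submatrix s id * (1 : Matrix (Fin k) (Fin k) (ZMod p)).submatrix id t
          = Mp.submatrix s t := by
        have := Matrix.submatrix_mul Mp (1 : Matrix (Fin k) (Fin k) (ZMod p))
          s id t Function.bijective_id
        simpa using this.symm
      rw [ha, hbb]
    calc r = (Mp.submatrix s t).rank := h1.symm
      _ ≤ ((1 : Matrix (Fin l) (Fin l) (ZMod p)).submatrix s id * Mp).rank := by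
          rw [h2]; exact Matrix.rank_mul_le_left _ _
      _ ≤ Mp.rank := Matrix.rank_mul_le_right _ _
  -- kernel mod p has dimension at most m
  have hnull : Mp.rank + Module.finrank (ZMod p) (LinearMap.ker Mp.mulVecLin) = k := by
    have h1 := LinearMap.finrank_range_add_finrank_ker Mp.mulVecLin
    simpa [Matrix.rank, Module.finrank_fin_fun, Fintype.card_fin] using h1
  set W := Submodule.span (ZMod p) (Set.range wbar) with hW
  have hWfin : Module.finrank (ZMod p) W = m :=
    (finrank_span_eq_card hindp).trans (Fintype.card_fin m)
  have hWle : W ≤ LinearMap.ker Mp.mulVecLin := by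
    rw [hW, Submodule.span_le]
    rintro x ⟨i, rfl⟩
    rw [SetLike.mem_coe, LinearMap.mem_ker, Matrix.mulVecLin_apply]
    exact hwbar_ker i
  have hkerW : LinearMap.ker Mp.mulVecLin = W := by
    refine (Submodule.eq_of_le_of_finrank_le hWle ?_).symm
    rw [hWfin]
    omega
  -- conclude
  have hvW : v ∈ W := by
    rw [← hkerW, LinearMap.mem_ker, Matrix.mulVecLin_apply]
    exact hv
  rw [hW, Submodule.mem_span_range_iff_exists_fun] at hvW
  obtain ⟨c, hc⟩ := hvW
  refine ⟨∑ i, ((c i).val : ℤ) • w i, hcomb _, ?_⟩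
  rw [cast_sum_smul]
  rw [← hc]
  refine Finset.sum_congr rfl fun i _ => ?_
  rw [show ((((c i).val : ℤ) : ZMod p)) = c i from hvalcast (c i)]
end

section
/- Let w and w' be sequences of random variables with w_0 = w'_0 = 0, each taking countably many values, such that for each i ≥ 0, P(w'_{i+1}=a | w'_i=b) = P(w_{i+1}=a | w_i=b) + δ(i,b,a) whenever P(w'_i=b) = P(w_i=b) ≠ 0. Then for any n ≥ 0 and any set A of values, |P(w_n ∈ A) - P(w'_n ∈ A)| ≤ (1/2) Σ_{i=0}^{n-1} Σ_b Σ_c |δ(i,b,c)| P(w_i = b) ≤ (1/2) Σ_{i=0}^{n-1} max_b Σ_c |δ(i,b,c)|. -/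
open MeasureTheory ProbabilityTheory
open scoped Classical

set_option linter.unusedSectionVars false

section AuxCoupling
variable {Ω : Type*} [MeasureSpace Ω] [IsProbabilityMeasure (ℙ : Measure Ω)]
  {S : Type*} [Countable S] [MeasurableSpace S] [MeasurableSingletonClass S]

lemma aux_sum_prob (f : Ω → S) (hf : Measurable f) :
    ∑' b : S, ℙ {ω | f ω = b} = 1 := by
  have hd : Pairwise (Function.onFun Disjoint fun b : S => {ω | f ω = b}) := by
    intro a b hab
    simp only [Function.onFun, Set.disjoint_left]
    rintro ω (h1 : f ω = a) (h2 : f ω = b)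
    exact hab (h1 ▸ h2 ▸ rfl)
  have hm : ∀ b : S, MeasurableSet {ω | f ω = b} := fun b => hf (measurableSet_singleton b)
  rw [← measure_iUnion hd hm]
  have : ⋃ b : S, {ω | f ω = b} = Set.univ := by
    ext ω; simp [Set.mem_iUnion]
  rw [this, measure_univ]

lemma aux_meas_joint (f g : Ω → S) (hf : Measurable f) (hg : Measurable g) (c b : S) :
    MeasurableSet {ω | f ω = c ∧ g ω = b} := by
  have : {ω | f ω = c ∧ g ω = b} = {ω | f ω = c} ∩ {ω | g ω = b} := rfl
  rw [this]
  exact (hf (measurableSet_singleton c)).inter (hg (measurableSet_singleton b))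

lemma aux_decomp_fst (f g : Ω → S) (hf : Measurable f) (hg : Measurable g) (c : S) :
    ℙ {ω | f ω = c} = ∑' b : S, ℙ {ω | f ω = c ∧ g ω = b} := by
  have hU : {ω | f ω = c} = ⋃ b : S, {ω | f ω = c ∧ g ω = b} := by
    ext ω; simp [Set.mem_iUnion]
  rw [hU, measure_iUnion]
  · intro a b hab
    simp only [Function.onFun, Set.disjoint_left]
    rintro ω ⟨_, h1⟩ ⟨_, h2⟩
    exact hab (h1 ▸ h2 ▸ rfl)
  · exact fun b => aux_meas_joint f g hf hg c b

lemma aux_decomp_snd (f g : Ω → S) (hf : Measurable f) (hg : Measurable g) (b : S) :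
    ℙ {ω | g ω = b} = ∑' c : S, ℙ {ω | f ω = c ∧ g ω = b} := by
  have hU : {ω | g ω = b} = ⋃ c : S, {ω | f ω = c ∧ g ω = b} := by
    ext ω; simp [Set.mem_iUnion]
  rw [hU, measure_iUnion]
  · intro a c hac
    simp only [Function.onFun, Set.disjoint_left]
    rintro ω ⟨h1, _⟩ ⟨h2, _⟩
    exact hac (h1 ▸ h2 ▸ rfl)
  · exact fun c => aux_meas_joint f g hf hg c b

lemma aux_joint_sum (f g : Ω → S) (hf : Measurable f) (hg : Measurable g) :
    ∑' cb : S × S, ℙ {ω | f ω = cb.1 ∧ g ω = cb.2} = 1 := by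
  have hd : Pairwise (Function.onFun Disjoint
      fun cb : S × S => {ω | f ω = cb.1 ∧ g ω = cb.2}) := by
    intro a b hab
    simp only [Function.onFun, Set.disjoint_left]
    rintro ω ⟨h1, h2⟩ ⟨h3, h4⟩
    exact hab (Prod.ext (h1 ▸ h3 ▸ rfl) (h2 ▸ h4 ▸ rfl))
  rw [← measure_iUnion hd (fun cb => aux_meas_joint f g hf hg cb.1 cb.2)]
  have : ⋃ cb : S × S, {ω | f ω = cb.1 ∧ g ω = cb.2} = Set.univ := by
    ext ω
    simp only [Set.mem_iUnion, Set.mem_univ, iff_true]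
    exact ⟨(f ω, g ω), rfl, rfl⟩
  rw [this, measure_univ]


lemma aux_summable_prob (f : Ω → S) (hf : Measurable f) :
    Summable fun b : S => (ℙ {ω | f ω = b}).toReal :=
  ENNReal.summable_toReal (by rw [aux_sum_prob f hf]; exact ENNReal.one_ne_top)

lemma aux_tsum_prob (f : Ω → S) (hf : Measurable f) :
    ∑' b : S, (ℙ {ω | f ω = b}).toReal = 1 := by
  rw [← ENNReal.tsum_toReal_eq (fun b => measure_ne_top _ _), aux_sum_prob f hf,
    ENNReal.toReal_one]

lemma aux_summable_joint (f g : Ω → S) (hf : Measurable f) (hg : Measurable g) :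
    Summable fun cb : S × S => (ℙ {ω | f ω = cb.1 ∧ g ω = cb.2}).toReal :=
  ENNReal.summable_toReal (by rw [aux_joint_sum f g hf hg]; exact ENNReal.one_ne_top)

lemma aux_summable_joint_fst (f g : Ω → S) (hf : Measurable f) (hg : Measurable g) (b : S) :
    Summable fun c : S => (ℙ {ω | f ω = c ∧ g ω = b}).toReal :=
  ENNReal.summable_toReal (by rw [← aux_decomp_snd f g hf hg b]; exact measure_ne_top _ _)

lemma aux_tsum_joint_fst (f g : Ω → S) (hf : Measurable f) (hg : Measurable g) (b : S) :
    ∑' c : S, (ℙ {ω | f ω = c ∧ g ω = b}).toReal = (ℙ {ω | g ω = b}).toReal := by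
  rw [← ENNReal.tsum_toReal_eq (fun c => measure_ne_top _ _), ← aux_decomp_snd f g hf hg b]

lemma aux_summable_joint_snd (f g : Ω → S) (hf : Measurable f) (hg : Measurable g) (c : S) :
    Summable fun b : S => (ℙ {ω | f ω = c ∧ g ω = b}).toReal :=
  ENNReal.summable_toReal (by rw [← aux_decomp_fst f g hf hg c]; exact measure_ne_top _ _)

lemma aux_tsum_joint_snd (f g : Ω → S) (hf : Measurable f) (hg : Measurable g) (c : S) :
    ∑' b : S, (ℙ {ω | f ω = c ∧ g ω = b}).toReal = (ℙ {ω | f ω = c}).toReal := by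
  rw [← ENNReal.tsum_toReal_eq (fun b => measure_ne_top _ _), ← aux_decomp_fst f g hf hg c]

lemma aux_event (f : Ω → S) (hf : Measurable f) (A : Set S) :
    ℙ {ω | f ω ∈ A} = ∑' b : S, if b ∈ A then ℙ {ω | f ω = b} else 0 := by
  have key : ∀ b : S, ℙ {ω | f ω = b ∧ b ∈ A} = if b ∈ A then ℙ {ω | f ω = b} else 0 := by
    intro b
    by_cases hb : b ∈ A
    · rw [if_pos hb]
      congr 1
      ext ω; simp [hb]
    · rw [if_neg hb]
      have : {ω : Ω | f ω = b ∧ b ∈ A} = ∅ := by ext ω; simp [hb]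
      rw [this, measure_empty]
  rw [← tsum_congr key]
  have hU : {ω | f ω ∈ A} = ⋃ b : S, {ω | f ω = b ∧ b ∈ A} := by
    ext ω; simp [Set.mem_iUnion]
  rw [hU, measure_iUnion]
  · intro a b hab
    simp only [Function.onFun, Set.disjoint_left]
    rintro ω ⟨h1, _⟩ ⟨h2, _⟩
    exact hab (h1 ▸ h2 ▸ rfl)
  · intro b
    by_cases hb : b ∈ A
    · have : {ω : Ω | f ω = b ∧ b ∈ A} = {ω | f ω = b} := by ext ω; simp [hb]
      rw [this]; exact hf (measurableSet_singleton b)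
    · have : {ω : Ω | f ω = b ∧ b ∈ A} = ∅ := by ext ω; simp [hb]
      rw [this]; exact MeasurableSet.empty

lemma aux_event_real (f : Ω → S) (hf : Measurable f) (A : Set S) :
    (ℙ {ω | f ω ∈ A}).toReal
      = ∑' b : S, if b ∈ A then (ℙ {ω | f ω = b}).toReal else 0 := by
  rw [aux_event f hf A, ENNReal.tsum_toReal_eq]
  · exact tsum_congr fun b => by
      by_cases hb : b ∈ A <;> simp [hb]
  · intro b
    by_cases hb : b ∈ A <;> simp [hb, measure_ne_top]

lemma aux_summable_event (f : Ω → S) (hf : Measurable f) (A : Set S) :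
    Summable fun b : S => if b ∈ A then (ℙ {ω | f ω = b}).toReal else 0 := by
  apply Summable.of_nonneg_of_le (fun b => ?_) (fun b => ?_) (aux_summable_prob f hf)
  · by_cases hb : b ∈ A <;> simp [hb, ENNReal.toReal_nonneg]
  · by_cases hb : b ∈ A <;> simp [hb, ENNReal.toReal_nonneg]


/-- If both marginals at time `i+1` vanish at `c`, the error `δ i b c` vanishes (when
`b` has positive probability for both chains). -/
lemma aux_delta_zero (w w' : ℕ → Ω → S) (δ : ℕ → S → S → ℝ)
    (hδ : ∀ (i : ℕ) (b a : S),
      ℙ {ω | w' i ω = b} ≠ 0 → ℙ {ω | w i ω = b} ≠ 0 →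
      (ℙ {ω | w' (i + 1) ω = a ∧ w' i ω = b}).toReal / (ℙ {ω | w' i ω = b}).toReal
        = (ℙ {ω | w (i + 1) ω = a ∧ w i ω = b}).toReal / (ℙ {ω | w i ω = b}).toReal
          + δ i b a)
    (i : ℕ) (b c : S)
    (hp : ℙ {ω | w i ω = b} ≠ 0) (hq : ℙ {ω | w' i ω = b} ≠ 0)
    (hc : ¬(ℙ {ω | w (i + 1) ω = c} ≠ 0 ∨ ℙ {ω | w' (i + 1) ω = c} ≠ 0)) :
    δ i b c = 0 := by
  push_neg at hc
  obtain ⟨hc1, hc2⟩ := hc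
  have hP : ℙ {ω | w (i + 1) ω = c ∧ w i ω = b} = 0 :=
    le_antisymm (hc1 ▸ measure_mono fun ω h => h.1) zero_le
  have hQ : ℙ {ω | w' (i + 1) ω = c ∧ w' i ω = b} = 0 :=
    le_antisymm (hc2 ▸ measure_mono fun ω h => h.1) zero_le
  have h := hδ i b c hq hp
  rw [hP, hQ] at h
  simpa using h.symm

/-- For `b` with both probabilities nonzero, `|δ i b ·|` is summable with sum at most 2. -/
lemma aux_absdelta (w w' : ℕ → Ω → S) (hwm : ∀ i, Measurable (w i))
    (hw'm : ∀ i, Measurable (w' i)) (δ : ℕ → S → S → ℝ)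
    (hδ : ∀ (i : ℕ) (b a : S),
      ℙ {ω | w' i ω = b} ≠ 0 → ℙ {ω | w i ω = b} ≠ 0 →
      (ℙ {ω | w' (i + 1) ω = a ∧ w' i ω = b}).toReal / (ℙ {ω | w' i ω = b}).toReal
        = (ℙ {ω | w (i + 1) ω = a ∧ w i ω = b}).toReal / (ℙ {ω | w i ω = b}).toReal
          + δ i b a)
    (i : ℕ) (b : S)
    (hp : ℙ {ω | w i ω = b} ≠ 0) (hq : ℙ {ω | w' i ω = b} ≠ 0) :
    Summable (fun c : S => |δ i b c|) ∧ ∑' c : S, |δ i b c| ≤ 2 := by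
  have hpb : (0:ℝ) < (ℙ {ω | w i ω = b}).toReal :=
    ENNReal.toReal_pos hp (measure_ne_top _ _)
  have hqb : (0:ℝ) < (ℙ {ω | w' i ω = b}).toReal :=
    ENNReal.toReal_pos hq (measure_ne_top _ _)
  set pb := (ℙ {ω | w i ω = b}).toReal
  set qb := (ℙ {ω | w' i ω = b}).toReal
  have hsQ : Summable fun c : S =>
      (ℙ {ω | w' (i+1) ω = c ∧ w' i ω = b}).toReal / qb :=
    (aux_summable_joint_fst (w' (i+1)) (w' i) (hw'm _) (hw'm _) b).div_const qb
  have hsP : Summable fun c : S =>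
      (ℙ {ω | w (i+1) ω = c ∧ w i ω = b}).toReal / pb :=
    (aux_summable_joint_fst (w (i+1)) (w i) (hwm _) (hwm _) b).div_const pb
  have hbound : ∀ c : S, |δ i b c| ≤
      (ℙ {ω | w' (i+1) ω = c ∧ w' i ω = b}).toReal / qb
        + (ℙ {ω | w (i+1) ω = c ∧ w i ω = b}).toReal / pb := by
    intro c
    have h := hδ i b c hq hp
    have hδc : δ i b c = (ℙ {ω | w' (i+1) ω = c ∧ w' i ω = b}).toReal / qb
        - (ℙ {ω | w (i+1) ω = c ∧ w i ω = b}).toReal / pb := by linarith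
    rw [hδc]
    have h1 : (0:ℝ) ≤ (ℙ {ω | w' (i+1) ω = c ∧ w' i ω = b}).toReal / qb :=
      div_nonneg ENNReal.toReal_nonneg hqb.le
    have h2 : (0:ℝ) ≤ (ℙ {ω | w (i+1) ω = c ∧ w i ω = b}).toReal / pb :=
      div_nonneg ENNReal.toReal_nonneg hpb.le
    calc |_ - _| ≤ |_| + |_| := abs_sub _ _
    _ = _ := by rw [abs_of_nonneg h1, abs_of_nonneg h2]
  have hsum : Summable (fun c : S => |δ i b c|) :=
    Summable.of_nonneg_of_le (fun c => abs_nonneg _) hbound (hsQ.add hsP)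
  refine ⟨hsum, ?_⟩
  calc ∑' c : S, |δ i b c| ≤ ∑' c : S,
      ((ℙ {ω | w' (i+1) ω = c ∧ w' i ω = b}).toReal / qb
        + (ℙ {ω | w (i+1) ω = c ∧ w i ω = b}).toReal / pb) :=
    Summable.tsum_le_tsum hbound hsum (hsQ.add hsP)
  _ = qb / qb + pb / pb := by
    rw [Summable.tsum_add hsQ hsP, tsum_div_const, tsum_div_const,
      aux_tsum_joint_fst (w' (i+1)) (w' i) (hw'm _) (hw'm _) b,
      aux_tsum_joint_fst (w (i+1)) (w i) (hwm _) (hwm _) b]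
  _ = 2 := by rw [div_self hpb.ne', div_self hqb.ne']; norm_num


/-- The inner `if`-sum (without the `p` factor) is summable and bounded by 2. -/
lemma aux_t_ite (w w' : ℕ → Ω → S) (hwm : ∀ i, Measurable (w i))
    (hw'm : ∀ i, Measurable (w' i)) (δ : ℕ → S → S → ℝ)
    (hδ : ∀ (i : ℕ) (b a : S),
      ℙ {ω | w' i ω = b} ≠ 0 → ℙ {ω | w i ω = b} ≠ 0 →
      (ℙ {ω | w' (i + 1) ω = a ∧ w' i ω = b}).toReal / (ℙ {ω | w' i ω = b}).toReal
        = (ℙ {ω | w (i + 1) ω = a ∧ w i ω = b}).toReal / (ℙ {ω | w i ω = b}).toReal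
          + δ i b a)
    (i : ℕ) (b : S) :
    Summable (fun c : S => if (ℙ {ω | w i ω = b} ≠ 0 ∧ ℙ {ω | w' i ω = b} ≠ 0) ∧
          (ℙ {ω | w (i + 1) ω = c} ≠ 0 ∨ ℙ {ω | w' (i + 1) ω = c} ≠ 0)
        then |δ i b c| else 0)
      ∧ ∑' c : S, (if (ℙ {ω | w i ω = b} ≠ 0 ∧ ℙ {ω | w' i ω = b} ≠ 0) ∧
          (ℙ {ω | w (i + 1) ω = c} ≠ 0 ∨ ℙ {ω | w' (i + 1) ω = c} ≠ 0)
        then |δ i b c| else 0) ≤ 2 := by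
  by_cases hb : ℙ {ω | w i ω = b} ≠ 0 ∧ ℙ {ω | w' i ω = b} ≠ 0
  · obtain ⟨habsd, habsd2⟩ := aux_absdelta w w' hwm hw'm δ hδ i b hb.1 hb.2
    have hle : ∀ c : S, (if (ℙ {ω | w i ω = b} ≠ 0 ∧ ℙ {ω | w' i ω = b} ≠ 0) ∧
          (ℙ {ω | w (i + 1) ω = c} ≠ 0 ∨ ℙ {ω | w' (i + 1) ω = c} ≠ 0)
        then |δ i b c| else 0) ≤ |δ i b c| := by
      intro c
      split
      · exact le_rfl
      · exact abs_nonneg _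
    have hnn : ∀ c : S, (0:ℝ) ≤ (if (ℙ {ω | w i ω = b} ≠ 0 ∧ ℙ {ω | w' i ω = b} ≠ 0) ∧
          (ℙ {ω | w (i + 1) ω = c} ≠ 0 ∨ ℙ {ω | w' (i + 1) ω = c} ≠ 0)
        then |δ i b c| else 0) := by
      intro c; split
      · exact abs_nonneg _
      · exact le_rfl
    have hs := Summable.of_nonneg_of_le hnn hle habsd
    exact ⟨hs, (Summable.tsum_le_tsum hle hs habsd).trans habsd2⟩
  · have hz : ∀ c : S, (if (ℙ {ω | w i ω = b} ≠ 0 ∧ ℙ {ω | w' i ω = b} ≠ 0) ∧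
          (ℙ {ω | w (i + 1) ω = c} ≠ 0 ∨ ℙ {ω | w' (i + 1) ω = c} ≠ 0)
        then |δ i b c| else 0) = 0 := fun c => if_neg (fun h => hb h.1)
    have he : (fun c : S => if (ℙ {ω | w i ω = b} ≠ 0 ∧ ℙ {ω | w' i ω = b} ≠ 0) ∧
          (ℙ {ω | w (i + 1) ω = c} ≠ 0 ∨ ℙ {ω | w' (i + 1) ω = c} ≠ 0)
        then |δ i b c| else 0) = fun _ => (0:ℝ) := funext hz
    rw [he]
    exact ⟨summable_zero, by rw [tsum_zero]; norm_num⟩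

/-- Central per-`b` estimate. -/
lemma aux_per_b (w w' : ℕ → Ω → S) (hwm : ∀ i, Measurable (w i))
    (hw'm : ∀ i, Measurable (w' i)) (δ : ℕ → S → S → ℝ)
    (hδ : ∀ (i : ℕ) (b a : S),
      ℙ {ω | w' i ω = b} ≠ 0 → ℙ {ω | w i ω = b} ≠ 0 →
      (ℙ {ω | w' (i + 1) ω = a ∧ w' i ω = b}).toReal / (ℙ {ω | w' i ω = b}).toReal
        = (ℙ {ω | w (i + 1) ω = a ∧ w i ω = b}).toReal / (ℙ {ω | w i ω = b}).toReal
          + δ i b a)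
    (i : ℕ) (b : S) :
    ∑' c : S, |(ℙ {ω | w (i+1) ω = c ∧ w i ω = b}).toReal
        - (ℙ {ω | w' (i+1) ω = c ∧ w' i ω = b}).toReal|
      ≤ |(ℙ {ω | w i ω = b}).toReal - (ℙ {ω | w' i ω = b}).toReal|
        + ∑' c : S, (if (ℙ {ω | w i ω = b} ≠ 0 ∧ ℙ {ω | w' i ω = b} ≠ 0) ∧
              (ℙ {ω | w (i + 1) ω = c} ≠ 0 ∨ ℙ {ω | w' (i + 1) ω = c} ≠ 0)
            then |δ i b c| * (ℙ {ω | w i ω = b}).toReal else 0) := by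
  have hsP := aux_summable_joint_fst (w (i+1)) (w i) (hwm _) (hwm _) b
  have hsQ := aux_summable_joint_fst (w' (i+1)) (w' i) (hw'm _) (hw'm _) b
  have htP := aux_tsum_joint_fst (w (i+1)) (w i) (hwm _) (hwm _) b
  have htQ := aux_tsum_joint_fst (w' (i+1)) (w' i) (hw'm _) (hw'm _) b
  have hsD : Summable fun c : S => |(ℙ {ω | w (i+1) ω = c ∧ w i ω = b}).toReal
      - (ℙ {ω | w' (i+1) ω = c ∧ w' i ω = b}).toReal| := by
    apply Summable.of_nonneg_of_le (fun c => abs_nonneg _) (fun c => abs_sub _ _)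
    exact (hsP.abs.add hsQ.abs).congr (fun c => rfl)
  by_cases hb : ℙ {ω | w i ω = b} ≠ 0 ∧ ℙ {ω | w' i ω = b} ≠ 0
  · obtain ⟨hp, hq⟩ := hb
    have hpb : (0:ℝ) < (ℙ {ω | w i ω = b}).toReal :=
      ENNReal.toReal_pos hp (measure_ne_top _ _)
    have hqb : (0:ℝ) < (ℙ {ω | w' i ω = b}).toReal :=
      ENNReal.toReal_pos hq (measure_ne_top _ _)
    obtain ⟨habsd, -⟩ := aux_absdelta w w' hwm hw'm δ hδ i b hp hq
    set pb := (ℙ {ω | w i ω = b}).toReal with hpbdef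
    set qb := (ℙ {ω | w' i ω = b}).toReal with hqbdef
    -- the key algebraic identity
    have hident : ∀ c : S, (ℙ {ω | w (i+1) ω = c ∧ w i ω = b}).toReal
        - (ℙ {ω | w' (i+1) ω = c ∧ w' i ω = b}).toReal
        = (ℙ {ω | w' (i+1) ω = c ∧ w' i ω = b}).toReal / qb * (pb - qb)
          - δ i b c * pb := by
      intro c
      have h := hδ i b c hq hp
      have hδc : δ i b c = (ℙ {ω | w' (i+1) ω = c ∧ w' i ω = b}).toReal / qb
          - (ℙ {ω | w (i+1) ω = c ∧ w i ω = b}).toReal / pb := by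
        rw [← hpbdef, ← hqbdef] at h; linarith
      rw [hδc]
      field_simp
      ring
    have habs : ∀ c : S, |(ℙ {ω | w (i+1) ω = c ∧ w i ω = b}).toReal
        - (ℙ {ω | w' (i+1) ω = c ∧ w' i ω = b}).toReal|
        ≤ (ℙ {ω | w' (i+1) ω = c ∧ w' i ω = b}).toReal / qb * |pb - qb|
          + |δ i b c| * pb := by
      intro c
      rw [hident c]
      calc |_ - _| ≤ |_| + |_| := abs_sub _ _
      _ = _ := by
        rw [abs_mul, abs_mul, abs_of_nonneg (div_nonneg ENNReal.toReal_nonneg hqb.le),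
          abs_of_nonneg hpb.le]
    have hs1 : Summable fun c : S =>
        (ℙ {ω | w' (i+1) ω = c ∧ w' i ω = b}).toReal / qb * |pb - qb| :=
      (hsQ.div_const qb).mul_right _
    have hs2 : Summable fun c : S => |δ i b c| * pb := habsd.mul_right pb
    have key := Summable.tsum_le_tsum habs hsD (hs1.add hs2)
    have heval : ∑' c : S, ((ℙ {ω | w' (i+1) ω = c ∧ w' i ω = b}).toReal / qb * |pb - qb|
        + |δ i b c| * pb) = |pb - qb| + (∑' c : S, |δ i b c|) * pb := by
      rw [Summable.tsum_add hs1 hs2, tsum_mul_right, tsum_mul_right, tsum_div_const, htQ,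
        div_self hqb.ne', one_mul]
    -- identify the ite-sum with the full |δ| sum
    have hitesum : ∑' c : S, (if (ℙ {ω | w i ω = b} ≠ 0 ∧ ℙ {ω | w' i ω = b} ≠ 0) ∧
          (ℙ {ω | w (i + 1) ω = c} ≠ 0 ∨ ℙ {ω | w' (i + 1) ω = c} ≠ 0)
        then |δ i b c| * pb else 0) = (∑' c : S, |δ i b c|) * pb := by
      rw [← tsum_mul_right]
      apply tsum_congr
      intro c
      by_cases hc : ℙ {ω | w (i + 1) ω = c} ≠ 0 ∨ ℙ {ω | w' (i + 1) ω = c} ≠ 0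
      · rw [if_pos ⟨⟨hp, hq⟩, hc⟩]
      · rw [if_neg (fun h => hc h.2), aux_delta_zero w w' δ hδ i b c hp hq hc]
        simp
    rw [hitesum]
    calc _ ≤ _ := key
    _ = _ := heval
  · -- degenerate case: one of the probabilities at time i vanishes
    have hz : ∀ c : S, (if (ℙ {ω | w i ω = b} ≠ 0 ∧ ℙ {ω | w' i ω = b} ≠ 0) ∧
          (ℙ {ω | w (i + 1) ω = c} ≠ 0 ∨ ℙ {ω | w' (i + 1) ω = c} ≠ 0)
        then |δ i b c| * (ℙ {ω | w i ω = b}).toReal else 0) = 0 :=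
      fun c => if_neg (fun h => hb h.1)
    rw [tsum_congr hz, tsum_zero, add_zero]
    rw [not_and_or] at hb
    rcases hb with hb | hb
    · push_neg at hb
      have hP0 : ∀ c : S, (ℙ {ω | w (i+1) ω = c ∧ w i ω = b}).toReal = 0 := by
        intro c
        have : ℙ {ω | w (i+1) ω = c ∧ w i ω = b} = 0 :=
          le_antisymm (hb ▸ measure_mono fun ω h => h.2) zero_le
        rw [this, ENNReal.toReal_zero]
      have hcongr : ∀ c : S, |(ℙ {ω | w (i+1) ω = c ∧ w i ω = b}).toReal
          - (ℙ {ω | w' (i+1) ω = c ∧ w' i ω = b}).toReal|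
          = (ℙ {ω | w' (i+1) ω = c ∧ w' i ω = b}).toReal := by
        intro c
        rw [hP0 c, zero_sub, abs_neg, abs_of_nonneg ENNReal.toReal_nonneg]
      rw [tsum_congr hcongr, htQ]
      have : (ℙ {ω | w i ω = b}).toReal = 0 := by rw [hb, ENNReal.toReal_zero]
      rw [this, zero_sub, abs_neg, abs_of_nonneg ENNReal.toReal_nonneg]
    · push_neg at hb
      have hQ0 : ∀ c : S, (ℙ {ω | w' (i+1) ω = c ∧ w' i ω = b}).toReal = 0 := by
        intro c
        have : ℙ {ω | w' (i+1) ω = c ∧ w' i ω = b} = 0 :=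
          le_antisymm (hb ▸ measure_mono fun ω h => h.2) zero_le
        rw [this, ENNReal.toReal_zero]
      have hcongr : ∀ c : S, |(ℙ {ω | w (i+1) ω = c ∧ w i ω = b}).toReal
          - (ℙ {ω | w' (i+1) ω = c ∧ w' i ω = b}).toReal|
          = (ℙ {ω | w (i+1) ω = c ∧ w i ω = b}).toReal := by
        intro c
        rw [hQ0 c, sub_zero, abs_of_nonneg ENNReal.toReal_nonneg]
      rw [tsum_congr hcongr, htP]
      have : (ℙ {ω | w' i ω = b}).toReal = 0 := by rw [hb, ENNReal.toReal_zero]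
      rw [this, sub_zero, abs_of_nonneg ENNReal.toReal_nonneg]


/-- The `t`-term equals a product, is summable and is bounded by `2 * p`. -/
lemma aux_t_props (w w' : ℕ → Ω → S) (hwm : ∀ i, Measurable (w i))
    (hw'm : ∀ i, Measurable (w' i)) (δ : ℕ → S → S → ℝ)
    (hδ : ∀ (i : ℕ) (b a : S),
      ℙ {ω | w' i ω = b} ≠ 0 → ℙ {ω | w i ω = b} ≠ 0 →
      (ℙ {ω | w' (i + 1) ω = a ∧ w' i ω = b}).toReal / (ℙ {ω | w' i ω = b}).toReal
        = (ℙ {ω | w (i + 1) ω = a ∧ w i ω = b}).toReal / (ℙ {ω | w i ω = b}).toReal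
          + δ i b a)
    (i : ℕ) (b : S) :
    (∑' c : S, (if (ℙ {ω | w i ω = b} ≠ 0 ∧ ℙ {ω | w' i ω = b} ≠ 0) ∧
          (ℙ {ω | w (i + 1) ω = c} ≠ 0 ∨ ℙ {ω | w' (i + 1) ω = c} ≠ 0)
        then |δ i b c| * (ℙ {ω | w i ω = b}).toReal else 0))
      = (∑' c : S, (if (ℙ {ω | w i ω = b} ≠ 0 ∧ ℙ {ω | w' i ω = b} ≠ 0) ∧
          (ℙ {ω | w (i + 1) ω = c} ≠ 0 ∨ ℙ {ω | w' (i + 1) ω = c} ≠ 0)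
        then |δ i b c| else 0)) * (ℙ {ω | w i ω = b}).toReal := by
  rw [← tsum_mul_right]
  apply tsum_congr
  intro c
  rw [ite_mul, zero_mul]

lemma aux_t_nonneg (w w' : ℕ → Ω → S) (δ : ℕ → S → S → ℝ) (i : ℕ) (b : S) :
    (0:ℝ) ≤ ∑' c : S, (if (ℙ {ω | w i ω = b} ≠ 0 ∧ ℙ {ω | w' i ω = b} ≠ 0) ∧
          (ℙ {ω | w (i + 1) ω = c} ≠ 0 ∨ ℙ {ω | w' (i + 1) ω = c} ≠ 0)
        then |δ i b c| * (ℙ {ω | w i ω = b}).toReal else 0) := by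
  apply tsum_nonneg
  intro c
  split
  · exact mul_nonneg (abs_nonneg _) ENNReal.toReal_nonneg
  · exact le_rfl

lemma aux_t_summable (w w' : ℕ → Ω → S) (hwm : ∀ i, Measurable (w i))
    (hw'm : ∀ i, Measurable (w' i)) (δ : ℕ → S → S → ℝ)
    (hδ : ∀ (i : ℕ) (b a : S),
      ℙ {ω | w' i ω = b} ≠ 0 → ℙ {ω | w i ω = b} ≠ 0 →
      (ℙ {ω | w' (i + 1) ω = a ∧ w' i ω = b}).toReal / (ℙ {ω | w' i ω = b}).toReal
        = (ℙ {ω | w (i + 1) ω = a ∧ w i ω = b}).toReal / (ℙ {ω | w i ω = b}).toReal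
          + δ i b a)
    (i : ℕ) :
    Summable (fun b : S => ∑' c : S, (if (ℙ {ω | w i ω = b} ≠ 0 ∧ ℙ {ω | w' i ω = b} ≠ 0) ∧
          (ℙ {ω | w (i + 1) ω = c} ≠ 0 ∨ ℙ {ω | w' (i + 1) ω = c} ≠ 0)
        then |δ i b c| * (ℙ {ω | w i ω = b}).toReal else 0)) := by
  apply Summable.of_nonneg_of_le (fun b => aux_t_nonneg w w' δ i b) (fun b => ?_)
    ((aux_summable_prob (w i) (hwm i)).mul_left 2)
  rw [aux_t_props w w' hwm hw'm δ hδ i b]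
  exact mul_le_mul_of_nonneg_right (aux_t_ite w w' hwm hw'm δ hδ i b).2
    ENNReal.toReal_nonneg

/-- One step of the total-variation recursion. -/
lemma aux_step (w w' : ℕ → Ω → S) (hwm : ∀ i, Measurable (w i))
    (hw'm : ∀ i, Measurable (w' i)) (δ : ℕ → S → S → ℝ)
    (hδ : ∀ (i : ℕ) (b a : S),
      ℙ {ω | w' i ω = b} ≠ 0 → ℙ {ω | w i ω = b} ≠ 0 →
      (ℙ {ω | w' (i + 1) ω = a ∧ w' i ω = b}).toReal / (ℙ {ω | w' i ω = b}).toReal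
        = (ℙ {ω | w (i + 1) ω = a ∧ w i ω = b}).toReal / (ℙ {ω | w i ω = b}).toReal
          + δ i b a)
    (i : ℕ) :
    ∑' c : S, |(ℙ {ω | w (i+1) ω = c}).toReal - (ℙ {ω | w' (i+1) ω = c}).toReal|
      ≤ (∑' b : S, |(ℙ {ω | w i ω = b}).toReal - (ℙ {ω | w' i ω = b}).toReal|)
        + ∑' b : S, ∑' c : S, (if (ℙ {ω | w i ω = b} ≠ 0 ∧ ℙ {ω | w' i ω = b} ≠ 0) ∧
              (ℙ {ω | w (i + 1) ω = c} ≠ 0 ∨ ℙ {ω | w' (i + 1) ω = c} ≠ 0)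
            then |δ i b c| * (ℙ {ω | w i ω = b}).toReal else 0) := by
  -- F on the product
  have hFnn : (0 : S × S → ℝ) ≤ fun cb : S × S => |(ℙ {ω | w (i+1) ω = cb.1 ∧ w i ω = cb.2}).toReal
      - (ℙ {ω | w' (i+1) ω = cb.1 ∧ w' i ω = cb.2}).toReal| :=
    fun cb => abs_nonneg _
  have hFprod : Summable fun cb : S × S =>
      |(ℙ {ω | w (i+1) ω = cb.1 ∧ w i ω = cb.2}).toReal
        - (ℙ {ω | w' (i+1) ω = cb.1 ∧ w' i ω = cb.2}).toReal| := by
    apply Summable.of_nonneg_of_le (fun cb => abs_nonneg _) (fun cb => abs_sub _ _)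
    exact ((aux_summable_joint (w (i+1)) (w i) (hwm _) (hwm _)).abs.add
      (aux_summable_joint (w' (i+1)) (w' i) (hw'm _) (hw'm _)).abs).congr (fun cb => rfl)
  obtain ⟨hslice_c, hmarg_c⟩ := (summable_prod_of_nonneg hFnn).mp hFprod
  have hFswap : Summable fun bc : S × S =>
      |(ℙ {ω | w (i+1) ω = bc.2 ∧ w i ω = bc.1}).toReal
        - (ℙ {ω | w' (i+1) ω = bc.2 ∧ w' i ω = bc.1}).toReal| := hFprod.prod_symm
  obtain ⟨hslice_b, hmarg_b⟩ := (summable_prod_of_nonneg (fun bc => abs_nonneg _)).mp hFswap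
  -- pointwise: |p_{i+1} c - q_{i+1} c| ≤ ∑' b, F (c, b)
  have hpoint : ∀ c : S, |(ℙ {ω | w (i+1) ω = c}).toReal - (ℙ {ω | w' (i+1) ω = c}).toReal|
      ≤ ∑' b : S, |(ℙ {ω | w (i+1) ω = c ∧ w i ω = b}).toReal
        - (ℙ {ω | w' (i+1) ω = c ∧ w' i ω = b}).toReal| := by
    intro c
    have h1 : (ℙ {ω | w (i+1) ω = c}).toReal - (ℙ {ω | w' (i+1) ω = c}).toReal
        = ∑' b : S, ((ℙ {ω | w (i+1) ω = c ∧ w i ω = b}).toReal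
          - (ℙ {ω | w' (i+1) ω = c ∧ w' i ω = b}).toReal) := by
      rw [Summable.tsum_sub (aux_summable_joint_snd (w (i+1)) (w i) (hwm _) (hwm _) c)
        (aux_summable_joint_snd (w' (i+1)) (w' i) (hw'm _) (hw'm _) c),
        aux_tsum_joint_snd (w (i+1)) (w i) (hwm _) (hwm _) c,
        aux_tsum_joint_snd (w' (i+1)) (w' i) (hw'm _) (hw'm _) c]
    rw [h1]
    have := norm_tsum_le_tsum_norm (f := fun b : S =>
      (ℙ {ω | w (i+1) ω = c ∧ w i ω = b}).toReal
        - (ℙ {ω | w' (i+1) ω = c ∧ w' i ω = b}).toReal) ?_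
    · simpa [Real.norm_eq_abs] using this
    · simpa [Real.norm_eq_abs] using hslice_c c
  -- sum over c, then swap
  have hsumL : Summable fun c : S =>
      |(ℙ {ω | w (i+1) ω = c}).toReal - (ℙ {ω | w' (i+1) ω = c}).toReal| := by
    apply Summable.of_nonneg_of_le (fun c => abs_nonneg _) (fun c => abs_sub _ _)
    exact ((aux_summable_prob (w (i+1)) (hwm _)).abs.add
      (aux_summable_prob (w' (i+1)) (hw'm _)).abs).congr (fun c => rfl)
  have step1 : ∑' c : S, |(ℙ {ω | w (i+1) ω = c}).toReal - (ℙ {ω | w' (i+1) ω = c}).toReal|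
      ≤ ∑' c : S, ∑' b : S, |(ℙ {ω | w (i+1) ω = c ∧ w i ω = b}).toReal
        - (ℙ {ω | w' (i+1) ω = c ∧ w' i ω = b}).toReal| :=
    Summable.tsum_le_tsum hpoint hsumL hmarg_c
  have hswap : ∑' c : S, ∑' b : S, |(ℙ {ω | w (i+1) ω = c ∧ w i ω = b}).toReal
        - (ℙ {ω | w' (i+1) ω = c ∧ w' i ω = b}).toReal|
      = ∑' b : S, ∑' c : S, |(ℙ {ω | w (i+1) ω = c ∧ w i ω = b}).toReal
        - (ℙ {ω | w' (i+1) ω = c ∧ w' i ω = b}).toReal| :=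
    Summable.tsum_comm' hFswap hslice_b hslice_c
  have hsumdiff : Summable fun b : S =>
      |(ℙ {ω | w i ω = b}).toReal - (ℙ {ω | w' i ω = b}).toReal| := by
    apply Summable.of_nonneg_of_le (fun b => abs_nonneg _) (fun b => abs_sub _ _)
    exact ((aux_summable_prob (w i) (hwm _)).abs.add
      (aux_summable_prob (w' i) (hw'm _)).abs).congr (fun b => rfl)
  have step2 : ∑' b : S, ∑' c : S, |(ℙ {ω | w (i+1) ω = c ∧ w i ω = b}).toReal
        - (ℙ {ω | w' (i+1) ω = c ∧ w' i ω = b}).toReal|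
      ≤ (∑' b : S, |(ℙ {ω | w i ω = b}).toReal - (ℙ {ω | w' i ω = b}).toReal|)
        + ∑' b : S, ∑' c : S, (if (ℙ {ω | w i ω = b} ≠ 0 ∧ ℙ {ω | w' i ω = b} ≠ 0) ∧
              (ℙ {ω | w (i + 1) ω = c} ≠ 0 ∨ ℙ {ω | w' (i + 1) ω = c} ≠ 0)
            then |δ i b c| * (ℙ {ω | w i ω = b}).toReal else 0) := by
    rw [← Summable.tsum_add hsumdiff (aux_t_summable w w' hwm hw'm δ hδ i)]
    exact Summable.tsum_le_tsum (fun b => aux_per_b w w' hwm hw'm δ hδ i b) hmarg_b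
      (hsumdiff.add (aux_t_summable w w' hwm hw'm δ hδ i))
  calc _ ≤ _ := step1
  _ = _ := hswap
  _ ≤ _ := step2


end AuxCoupling

/-- Coupling lemma: if the transition probabilities of two sequences `w`, `w'` of random
variables agree up to errors `δ(i,b,a)`, then the distributions of `w_n` and `w'_n` are close. -/
theorem approx_transition_coupling {Ω : Type*} [MeasureSpace Ω]
    [IsProbabilityMeasure (ℙ : Measure Ω)]
    {S : Type*} [Countable S] [MeasurableSpace S] [MeasurableSingletonClass S] [Zero S]
    (w w' : ℕ → Ω → S)
    (hw0 : ∀ ω, w 0 ω = 0) (hw'0 : ∀ ω, w' 0 ω = 0)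
    (hwm : ∀ i, Measurable (w i)) (hw'm : ∀ i, Measurable (w' i))
    (δ : ℕ → S → S → ℝ)
    (hδ : ∀ (i : ℕ) (b a : S),
      ℙ {ω | w' i ω = b} ≠ 0 → ℙ {ω | w i ω = b} ≠ 0 →
      (ℙ {ω | w' (i + 1) ω = a ∧ w' i ω = b}).toReal / (ℙ {ω | w' i ω = b}).toReal
        = (ℙ {ω | w (i + 1) ω = a ∧ w i ω = b}).toReal / (ℙ {ω | w i ω = b}).toReal
          + δ i b a)
    (n : ℕ) (A : Set S) :
    |(ℙ {ω | w n ω ∈ A}).toReal - (ℙ {ω | w' n ω ∈ A}).toReal| ≤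
      (1 / 2) * ∑ i ∈ Finset.range n, ∑' b : S, ∑' c : S,
        (if (ℙ {ω | w i ω = b} ≠ 0 ∧ ℙ {ω | w' i ω = b} ≠ 0) ∧
            (ℙ {ω | w (i + 1) ω = c} ≠ 0 ∨ ℙ {ω | w' (i + 1) ω = c} ≠ 0)
          then |δ i b c| * (ℙ {ω | w i ω = b}).toReal else 0)
    ∧ (1 / 2) * ∑ i ∈ Finset.range n, ∑' b : S, ∑' c : S,
        (if (ℙ {ω | w i ω = b} ≠ 0 ∧ ℙ {ω | w' i ω = b} ≠ 0) ∧
            (ℙ {ω | w (i + 1) ω = c} ≠ 0 ∨ ℙ {ω | w' (i + 1) ω = c} ≠ 0)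
          then |δ i b c| * (ℙ {ω | w i ω = b}).toReal else 0)
      ≤ (1 / 2) * ∑ i ∈ Finset.range n, ⨆ b : S, ∑' c : S,
          (if (ℙ {ω | w i ω = b} ≠ 0 ∧ ℙ {ω | w' i ω = b} ≠ 0) ∧
              (ℙ {ω | w (i + 1) ω = c} ≠ 0 ∨ ℙ {ω | w' (i + 1) ω = c} ≠ 0)
            then |δ i b c| else 0) := by
  constructor
  · -- Part 1
    -- total variation recursion
    have hD : ∀ m : ℕ,
        ∑' b : S, |(ℙ {ω | w m ω = b}).toReal - (ℙ {ω | w' m ω = b}).toReal|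
          ≤ ∑ i ∈ Finset.range m, ∑' b : S, ∑' c : S,
            (if (ℙ {ω | w i ω = b} ≠ 0 ∧ ℙ {ω | w' i ω = b} ≠ 0) ∧
                (ℙ {ω | w (i + 1) ω = c} ≠ 0 ∨ ℙ {ω | w' (i + 1) ω = c} ≠ 0)
              then |δ i b c| * (ℙ {ω | w i ω = b}).toReal else 0) := by
      intro m
      induction m with
      | zero =>
        have hset : ∀ b : S, {ω : Ω | w 0 ω = b} = {ω : Ω | w' 0 ω = b} := by
          intro b; ext ω
          simp only [Set.mem_setOf_eq, hw0 ω, hw'0 ω]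
        have : ∀ b : S,
            |(ℙ {ω | w 0 ω = b}).toReal - (ℙ {ω | w' 0 ω = b}).toReal| = 0 := by
          intro b; rw [hset b, sub_self, abs_zero]
        rw [tsum_congr this, tsum_zero, Finset.sum_range_zero]
      | succ i ih =>
        calc ∑' b : S, |(ℙ {ω | w (i+1) ω = b}).toReal - (ℙ {ω | w' (i+1) ω = b}).toReal|
            ≤ _ := aux_step w w' hwm hw'm δ hδ i
        _ ≤ _ := add_le_add_left ih _
        _ = _ := (Finset.sum_range_succ _ i).symm
    -- TV bound for events
    have hsg : Summable fun b : S =>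
        (ℙ {ω | w n ω = b}).toReal - (ℙ {ω | w' n ω = b}).toReal :=
      (aux_summable_prob (w n) (hwm n)).sub (aux_summable_prob (w' n) (hw'm n))
    have hgsum : ∑' b : S,
        ((ℙ {ω | w n ω = b}).toReal - (ℙ {ω | w' n ω = b}).toReal) = 0 := by
      rw [Summable.tsum_sub (aux_summable_prob (w n) (hwm n)) (aux_summable_prob (w' n) (hw'm n)),
        aux_tsum_prob (w n) (hwm n), aux_tsum_prob (w' n) (hw'm n), sub_self]
    have h1 : Summable fun b : S => if b ∈ A then
        (ℙ {ω | w n ω = b}).toReal - (ℙ {ω | w' n ω = b}).toReal else 0 := by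
      apply Summable.congr ((aux_summable_event (w n) (hwm n) A).sub
        (aux_summable_event (w' n) (hw'm n) A))
      intro b; by_cases hb : b ∈ A <;> simp [hb]
    have h2 : Summable fun b : S => if b ∉ A then
        (ℙ {ω | w n ω = b}).toReal - (ℙ {ω | w' n ω = b}).toReal else 0 := by
      apply Summable.congr (hsg.sub h1)
      intro b; by_cases hb : b ∈ A <;> simp [hb]
    have hSA : (ℙ {ω | w n ω ∈ A}).toReal - (ℙ {ω | w' n ω ∈ A}).toReal
        = ∑' b : S, (if b ∈ A then
            (ℙ {ω | w n ω = b}).toReal - (ℙ {ω | w' n ω = b}).toReal else 0) := by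
      rw [aux_event_real (w n) (hwm n) A, aux_event_real (w' n) (hw'm n) A,
        ← Summable.tsum_sub (aux_summable_event (w n) (hwm n) A) (aux_summable_event (w' n) (hw'm n) A)]
      apply tsum_congr
      intro b; by_cases hb : b ∈ A <;> simp [hb]
    have hzero : (∑' b : S, (if b ∈ A then
          (ℙ {ω | w n ω = b}).toReal - (ℙ {ω | w' n ω = b}).toReal else 0))
        + (∑' b : S, (if b ∉ A then
          (ℙ {ω | w n ω = b}).toReal - (ℙ {ω | w' n ω = b}).toReal else 0)) = 0 := by
      have e1 : (∑' b : S, (if b ∈ A then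
            (ℙ {ω | w n ω = b}).toReal - (ℙ {ω | w' n ω = b}).toReal else 0))
          + (∑' b : S, (if b ∉ A then
            (ℙ {ω | w n ω = b}).toReal - (ℙ {ω | w' n ω = b}).toReal else 0))
          = ∑' b : S, ((ℙ {ω | w n ω = b}).toReal - (ℙ {ω | w' n ω = b}).toReal) := by
        rw [← Summable.tsum_add h1 h2]
        exact tsum_congr fun b => by by_cases hb : b ∈ A <;> simp [hb]
      rw [e1, hgsum]
    have habs1 : Summable fun b : S => if b ∈ A then
        |(ℙ {ω | w n ω = b}).toReal - (ℙ {ω | w' n ω = b}).toReal| else 0 := by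
      apply Summable.congr h1.abs
      intro b; by_cases hb : b ∈ A <;> simp [hb]
    have habs2 : Summable fun b : S => if b ∉ A then
        |(ℙ {ω | w n ω = b}).toReal - (ℙ {ω | w' n ω = b}).toReal| else 0 := by
      apply Summable.congr h2.abs
      intro b; by_cases hb : b ∈ A <;> simp [hb]
    have hb1 : |∑' b : S, (if b ∈ A then
          (ℙ {ω | w n ω = b}).toReal - (ℙ {ω | w' n ω = b}).toReal else 0)|
        ≤ ∑' b : S, (if b ∈ A then
          |(ℙ {ω | w n ω = b}).toReal - (ℙ {ω | w' n ω = b}).toReal| else 0) := by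
      have := norm_tsum_le_tsum_norm (f := fun b : S => if b ∈ A then
        (ℙ {ω | w n ω = b}).toReal - (ℙ {ω | w' n ω = b}).toReal else 0) ?_
      · rw [Real.norm_eq_abs] at this
        refine this.trans (le_of_eq (tsum_congr fun b => ?_))
        by_cases hb : b ∈ A <;> simp [hb]
      · apply Summable.congr habs1
        intro b; by_cases hb : b ∈ A <;> simp [hb]
    have hb2 : |∑' b : S, (if b ∉ A then
          (ℙ {ω | w n ω = b}).toReal - (ℙ {ω | w' n ω = b}).toReal else 0)|
        ≤ ∑' b : S, (if b ∉ A then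
          |(ℙ {ω | w n ω = b}).toReal - (ℙ {ω | w' n ω = b}).toReal| else 0) := by
      have := norm_tsum_le_tsum_norm (f := fun b : S => if b ∉ A then
        (ℙ {ω | w n ω = b}).toReal - (ℙ {ω | w' n ω = b}).toReal else 0) ?_
      · rw [Real.norm_eq_abs] at this
        refine this.trans (le_of_eq (tsum_congr fun b => ?_))
        by_cases hb : b ∈ A <;> simp [hb]
      · apply Summable.congr habs2
        intro b; by_cases hb : b ∈ A <;> simp [hb]
    have hsplit : (∑' b : S, (if b ∈ A then
          |(ℙ {ω | w n ω = b}).toReal - (ℙ {ω | w' n ω = b}).toReal| else 0))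
        + (∑' b : S, (if b ∉ A then
          |(ℙ {ω | w n ω = b}).toReal - (ℙ {ω | w' n ω = b}).toReal| else 0))
        = ∑' b : S, |(ℙ {ω | w n ω = b}).toReal - (ℙ {ω | w' n ω = b}).toReal| := by
      rw [← Summable.tsum_add habs1 habs2]
      apply tsum_congr
      intro b; by_cases hb : b ∈ A <;> simp [hb]
    rw [hSA]
    have heq : |∑' b : S, (if b ∉ A then
          (ℙ {ω | w n ω = b}).toReal - (ℙ {ω | w' n ω = b}).toReal else 0)|
        = |∑' b : S, (if b ∈ A then
          (ℙ {ω | w n ω = b}).toReal - (ℙ {ω | w' n ω = b}).toReal else 0)| := by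
      have : (∑' b : S, (if b ∉ A then
          (ℙ {ω | w n ω = b}).toReal - (ℙ {ω | w' n ω = b}).toReal else 0))
          = -(∑' b : S, (if b ∈ A then
          (ℙ {ω | w n ω = b}).toReal - (ℙ {ω | w' n ω = b}).toReal else 0)) := by
        linarith
      rw [this, abs_neg]
    have final := hD n
    linarith [hb1, hb2]
  · -- Part 2
    apply mul_le_mul_of_nonneg_left _ (by norm_num : (0:ℝ) ≤ 1/2)
    apply Finset.sum_le_sum
    intro i _
    have hbdd : BddAbove (Set.range fun b : S => ∑' c : S,
        (if (ℙ {ω | w i ω = b} ≠ 0 ∧ ℙ {ω | w' i ω = b} ≠ 0) ∧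
            (ℙ {ω | w (i + 1) ω = c} ≠ 0 ∨ ℙ {ω | w' (i + 1) ω = c} ≠ 0)
          then |δ i b c| else 0)) := by
      refine ⟨2, ?_⟩
      rintro x ⟨b, rfl⟩
      exact (aux_t_ite w w' hwm hw'm δ hδ i b).2
    have hsum1 : Summable fun b : S => (∑' c : S,
        (if (ℙ {ω | w i ω = b} ≠ 0 ∧ ℙ {ω | w' i ω = b} ≠ 0) ∧
            (ℙ {ω | w (i + 1) ω = c} ≠ 0 ∨ ℙ {ω | w' (i + 1) ω = c} ≠ 0)
          then |δ i b c| else 0)) * (ℙ {ω | w i ω = b}).toReal :=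
      (aux_t_summable w w' hwm hw'm δ hδ i).congr
        (fun b => aux_t_props w w' hwm hw'm δ hδ i b)
    calc ∑' b : S, ∑' c : S,
        (if (ℙ {ω | w i ω = b} ≠ 0 ∧ ℙ {ω | w' i ω = b} ≠ 0) ∧
            (ℙ {ω | w (i + 1) ω = c} ≠ 0 ∨ ℙ {ω | w' (i + 1) ω = c} ≠ 0)
          then |δ i b c| * (ℙ {ω | w i ω = b}).toReal else 0)
        = ∑' b : S, (∑' c : S,
            (if (ℙ {ω | w i ω = b} ≠ 0 ∧ ℙ {ω | w' i ω = b} ≠ 0) ∧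
                (ℙ {ω | w (i + 1) ω = c} ≠ 0 ∨ ℙ {ω | w' (i + 1) ω = c} ≠ 0)
              then |δ i b c| else 0)) * (ℙ {ω | w i ω = b}).toReal :=
        tsum_congr (fun b => aux_t_props w w' hwm hw'm δ hδ i b)
    _ ≤ ∑' b : S, (⨆ b' : S, ∑' c : S,
            (if (ℙ {ω | w i ω = b'} ≠ 0 ∧ ℙ {ω | w' i ω = b'} ≠ 0) ∧
                (ℙ {ω | w (i + 1) ω = c} ≠ 0 ∨ ℙ {ω | w' (i + 1) ω = c} ≠ 0)
              then |δ i b' c| else 0)) * (ℙ {ω | w i ω = b}).toReal := by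
        apply Summable.tsum_le_tsum _ hsum1 ((aux_summable_prob (w i) (hwm i)).mul_left _)
        intro b
        exact mul_le_mul_of_nonneg_right (le_ciSup hbdd b) ENNReal.toReal_nonneg
    _ = _ := by
        rw [tsum_mul_left, aux_tsum_prob (w i) (hwm i), mul_one]
end

section
/- Let a, n be positive integers, G a finite abelian group whose exponent divides a, and X the reduction mod a of a random vector in ℤ^n with independent entries, each of which takes every residue class mod p with probability at most 1-α for every prime p (α-balanced). Let F : (ℤ/aℤ)^n → G be a homomorphism which is a code of distance w, meaning that for every subset σ ⊂ [n] with |σ| < w, F remains surjective when restricted to the coordinates outside σ. Then for every A ∈ G, |P(FX = A) - |G|^{-1}| ≤ ((|G|-1)/|G|)·exp(-αw/a²). -/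
open MeasureTheory ProbabilityTheory

open Real in
lemma aux_cos_bound {a m : ℕ} (ha : 0 < a) (hm1 : 1 ≤ m) (hm2 : 2 * m ≤ a) :
    Real.cos (2 * π * m / a) ≤ 1 - 8 / (a : ℝ) ^ 2 := by
  have hπ := Real.pi_pos
  have haR : (0:ℝ) < a := by exact_mod_cast ha
  have hmR : (1:ℝ) ≤ m := by exact_mod_cast hm1
  have hmaR : 2 * (m:ℝ) ≤ a := by exact_mod_cast hm2
  have hx0 : 0 ≤ 2 * π * m / a := by positivity
  have hxπ : 2 * π * m / a ≤ π := by
    rw [div_le_iff₀ haR]; nlinarith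
  have h := Real.cos_le_one_sub_mul_cos_sq (x := 2 * π * m / a)
    (by rw [abs_of_nonneg hx0]; exact hxπ)
  refine h.trans ?_
  have h1 : 2 / π ^ 2 * (2 * π * m / a) ^ 2 = 8 * m^2 / a^2 := by
    field_simp; ring
  rw [h1]
  have h2 : (8:ℝ) / a^2 ≤ 8 * m^2 / a^2 := by
    gcongr <;> nlinarith
  linarith

lemma aux_root_re {a : ℕ} (ha : 0 < a) {ζ : ℂ} (h1 : ζ ^ a = 1) (h2 : ζ ≠ 1) :
    ζ.re ≤ 1 - 8 / (a : ℝ) ^ 2 := by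
  haveI : NeZero a := ⟨ha.ne'⟩
  obtain ⟨k, hk, rfl⟩ := (Complex.isPrimitiveRoot_exp a ha.ne').eq_pow_of_pow_eq_one h1
  have hk0 : 0 < k := by
    rcases Nat.eq_zero_or_pos k with rfl | h
    · simp at h2
    · exact h
  have hre : (Complex.exp (2 * Real.pi * Complex.I / a) ^ k).re
      = Real.cos (2 * Real.pi * k / a) := by
    rw [← Complex.exp_nat_mul]
    have : (k : ℂ) * (2 * Real.pi * Complex.I / a) = ((2 * Real.pi * k / a : ℝ) : ℂ) * Complex.I := by
      push_cast; ring
    rw [this, Complex.exp_ofReal_mul_I_re]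
  rw [hre]
  rcases le_or_gt (2 * k) a with hle | hgt
  · exact aux_cos_bound ha hk0 hle
  · have hka : k < a := hk
    have h3 : Real.cos (2 * Real.pi * k / a) = Real.cos (2 * Real.pi * (a - k : ℕ) / a) := by
      have haR : (0:ℝ) < a := by exact_mod_cast ha
      have : (2 : ℝ) * Real.pi * ((a : ℝ) - k) / a = 2 * Real.pi - 2 * Real.pi * k / a := by
        field_simp
      rw [Nat.cast_sub hka.le, this, Real.cos_two_pi_sub]
    rw [h3]
    exact aux_cos_bound ha (by omega) (by omega)

lemma aux_abs_one {a : ℕ} (ha : 0 < a) {ζ : ℂ} (h1 : ζ ^ a = 1) : ‖ζ‖ = 1 := by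
  have h : (‖ζ‖) ^ a = 1 := by
    rw [← norm_pow, h1, norm_one]
  have h0 : 0 ≤ ‖ζ‖ := norm_nonneg ζ
  rcases lt_trichotomy (‖ζ‖) 1 with hlt | heq | hgt
  · have := pow_lt_one₀ h0 hlt ha.ne'
    rw [h] at this; linarith
  · exact heq
  · have := one_lt_pow₀ hgt ha.ne'
    rw [h] at this; linarith

lemma aux_char_sum {a : ℕ} [NeZero a] (ha : 0 < a) {α : ℝ} (hα0 : 0 ≤ α) (hα1 : α ≤ 1)
    (p : ZMod a → ℝ) (hp0 : ∀ c, 0 ≤ p c) (hp1 : ∑ c, p c = 1)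
    {ζ : ℂ} (hζa : ζ ^ a = 1) (hζ : ζ ≠ 1)
    (hbal : ∀ q : ℕ, q.Prime → q ∣ a → ∀ r : ZMod q,
      ∑ c ∈ Finset.univ.filter (fun c : ZMod a => ((c.val : ℕ) : ZMod q) = r), p c ≤ 1 - α) :
    ‖∑ c : ZMod a, (p c : ℂ) * ζ ^ c.val‖ ≤ Real.exp (-α / (a : ℝ) ^ 2) := by
  classical
  have hu : IsUnit ζ := IsUnit.of_pow_eq_one hζa ha.ne'
  obtain ⟨u, hu⟩ := hu
  set d := orderOf u with hd
  have hda : d ∣ a := orderOf_dvd_of_pow_eq_one (by ext; push_cast; rw [hu]; exact hζa)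
  have hd1 : d ≠ 1 := by
    intro h
    exact hζ (by rw [← hu, orderOf_eq_one_iff.mp h, Units.val_one])
  have hd0 : d ≠ 0 := by
    intro h
    rw [h] at hda
    exact ha.ne' (Nat.eq_zero_of_zero_dvd hda)
  set q := d.minFac with hq
  have hqp : q.Prime := Nat.minFac_prime hd1
  have hqa : q ∣ a := (Nat.minFac_dvd d).trans hda
  -- fiber bound
  have key : ∀ c₀ : ZMod a,
      ∑ c ∈ Finset.univ.filter (fun c : ZMod a => ζ ^ c.val = ζ ^ c₀.val), p c ≤ 1 - α := by
    intro c₀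
    refine le_trans (Finset.sum_le_sum_of_subset_of_nonneg ?_ (fun c _ _ => hp0 c))
      (hbal q hqp hqa ((c₀.val : ZMod q)))
    intro c hc
    simp only [Finset.mem_filter, Finset.mem_univ, true_and] at hc ⊢
    have hmod : c.val ≡ c₀.val [MOD d] := by
      rw [← pow_eq_pow_iff_modEq]
      ext
      push_cast
      rw [hu]
      exact hc
    have hmodq : c.val ≡ c₀.val [MOD q] := hmod.of_dvd (Nat.minFac_dvd d)
    exact (ZMod.natCast_eq_natCast_iff _ _ _).mpr hmodq
  set S : ℂ := ∑ c : ZMod a, (p c : ℂ) * ζ ^ c.val with hS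
  -- norm-squared expansion
  have habs : ∀ k : ℕ, ‖ζ ^ k‖ = 1 := by
    intro k; rw [norm_pow, aux_abs_one ha hζa, one_pow]
  have hnormsq : (Complex.normSq S : ℝ) =
      ∑ c : ZMod a, ∑ c' : ZMod a, p c * p c' * (ζ ^ c.val * (starRingEnd ℂ) (ζ ^ c'.val)).re := by
    have h1 : (Complex.normSq S : ℂ) = S * (starRingEnd ℂ) S := (Complex.mul_conj S).symm
    have h2 : S * (starRingEnd ℂ) S =
        ∑ c : ZMod a, ∑ c' : ZMod a,
          ((p c * p c' : ℝ) : ℂ) * (ζ ^ c.val * (starRingEnd ℂ) (ζ ^ c'.val)) := by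
      rw [hS, map_sum, Finset.sum_mul_sum]
      refine Finset.sum_congr rfl fun c _ => Finset.sum_congr rfl fun c' _ => ?_
      rw [map_mul]
      push_cast
      ring_nf
      rw [Complex.conj_ofReal]
      ring
    have h3 := congrArg Complex.re (h1.trans h2)
    rw [Complex.ofReal_re] at h3
    rw [h3, Complex.re_sum]
    refine Finset.sum_congr rfl fun c _ => ?_
    rw [Complex.re_sum]
    refine Finset.sum_congr rfl fun c' _ => ?_
    rw [Complex.re_ofReal_mul]
  -- pointwise bound
  have hpt : ∀ c c' : ZMod a, (ζ ^ c.val * (starRingEnd ℂ) (ζ ^ c'.val)).re ≤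
      (1 - 8 / (a:ℝ)^2) + (8 / (a:ℝ)^2) * (if ζ ^ c.val = ζ ^ c'.val then 1 else 0) := by
    intro c c'
    by_cases h : ζ ^ c.val = ζ ^ c'.val
    · rw [if_pos h, h, Complex.mul_conj]
      have : Complex.normSq (ζ ^ c'.val) = 1 := by
        rw [Complex.normSq_eq_norm_sq, habs, one_pow]
      rw [this]
      norm_num
    · rw [if_neg h, mul_zero, add_zero]
      set w := ζ ^ c.val * (starRingEnd ℂ) (ζ ^ c'.val) with hw
      have hconj : (starRingEnd ℂ) (ζ ^ c'.val) = (ζ ^ c'.val)⁻¹ := by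
        have hne : Complex.normSq (ζ ^ c'.val) = 1 := by
          rw [Complex.normSq_eq_norm_sq, habs, one_pow]
        have hh : ζ ^ c'.val * (starRingEnd ℂ) (ζ ^ c'.val) = 1 := by
          rw [Complex.mul_conj, hne, Complex.ofReal_one]
        exact (inv_eq_of_mul_eq_one_right hh).symm
      have hwa : w ^ a = 1 := by
        rw [hw, hconj, mul_pow, inv_pow, ← pow_mul, ← pow_mul, mul_comm c.val a,
          mul_comm c'.val a, pow_mul, pow_mul, hζa, one_pow, one_pow, inv_one, mul_one]
      have hw1 : w ≠ 1 := by
        intro hcon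
        apply h
        have hne0 : ζ ^ c'.val ≠ 0 := by
          intro h0
          have := habs c'.val
          rw [h0, norm_zero] at this; norm_num at this
        rw [hw, hconj] at hcon
        field_simp at hcon
        exact hcon
      exact aux_root_re ha hwa hw1
  -- sum bound
  have hQ : ∑ c : ZMod a, ∑ c' : ZMod a,
      p c * p c' * (if ζ ^ c.val = ζ ^ c'.val then 1 else 0) ≤ 1 - α := by
    calc ∑ c : ZMod a, ∑ c' : ZMod a, p c * p c' * (if ζ ^ c.val = ζ ^ c'.val then 1 else 0)
        = ∑ c : ZMod a, p c * ∑ c' ∈ Finset.univ.filter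
            (fun c' : ZMod a => ζ ^ c'.val = ζ ^ c.val), p c' := by
          refine Finset.sum_congr rfl fun c _ => ?_
          rw [Finset.mul_sum, Finset.sum_filter]
          refine Finset.sum_congr rfl fun c' _ => ?_
          by_cases h : ζ ^ c.val = ζ ^ c'.val
          · rw [if_pos h, if_pos h.symm]; ring
          · rw [if_neg h, if_neg (fun hh => h hh.symm)]; ring
      _ ≤ ∑ c : ZMod a, p c * (1 - α) := by
          refine Finset.sum_le_sum fun c _ => ?_
          exact mul_le_mul_of_nonneg_left (key c) (hp0 c)
      _ = 1 - α := by rw [← Finset.sum_mul, hp1, one_mul]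
  have hsum1 : ∑ c : ZMod a, ∑ c' : ZMod a, p c * p c' = 1 := by
    rw [← Finset.sum_mul_sum, hp1]; norm_num
  have hns : Complex.normSq S ≤ 1 - 8 * α / (a:ℝ)^2 := by
    rw [hnormsq]
    have step : ∑ c : ZMod a, ∑ c' : ZMod a, p c * p c' *
        (ζ ^ c.val * (starRingEnd ℂ) (ζ ^ c'.val)).re ≤
        ∑ c : ZMod a, ∑ c' : ZMod a, p c * p c' *
        ((1 - 8 / (a:ℝ)^2) + (8 / (a:ℝ)^2) * (if ζ ^ c.val = ζ ^ c'.val then 1 else 0)) := by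
      refine Finset.sum_le_sum fun c _ => Finset.sum_le_sum fun c' _ => ?_
      exact mul_le_mul_of_nonneg_left (hpt c c') (mul_nonneg (hp0 c) (hp0 c'))
    refine step.trans ?_
    have expand : ∑ c : ZMod a, ∑ c' : ZMod a, p c * p c' *
        ((1 - 8 / (a:ℝ)^2) + (8 / (a:ℝ)^2) * (if ζ ^ c.val = ζ ^ c'.val then 1 else 0)) =
        (1 - 8 / (a:ℝ)^2) * (∑ c : ZMod a, ∑ c' : ZMod a, p c * p c') +
        (8 / (a:ℝ)^2) * ∑ c : ZMod a, ∑ c' : ZMod a, p c * p c' *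
          (if ζ ^ c.val = ζ ^ c'.val then 1 else 0) := by
      rw [Finset.mul_sum, Finset.mul_sum, ← Finset.sum_add_distrib]
      refine Finset.sum_congr rfl fun c _ => ?_
      rw [Finset.mul_sum, Finset.mul_sum, ← Finset.sum_add_distrib]
      refine Finset.sum_congr rfl fun c' _ => ?_
      ring
    have ha2 : (0:ℝ) < 8 / (a:ℝ)^2 := by positivity
    have hgoal : (1 - 8/(a:ℝ)^2) * 1 + 8/(a:ℝ)^2 * (1-α) = 1 - 8*α/(a:ℝ)^2 := by
      field_simp; ring
    rw [expand, hsum1, ← hgoal]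
    have := mul_le_mul_of_nonneg_left hQ (le_of_lt ha2)
    linarith
  -- conclude
  have habs2 : ‖S‖ = Real.sqrt (Complex.normSq S) := Complex.norm_def S
  rw [habs2]
  have h1 : Complex.normSq S ≤ Real.exp (-2 * α / (a:ℝ)^2) := by
    refine hns.trans ?_
    have := Real.add_one_le_exp (-2 * α / (a:ℝ)^2)
    have ha2 : (0:ℝ) < (a:ℝ)^2 := by positivity
    have h8 : 1 - 8 * α / (a:ℝ)^2 ≤ 1 + (-2 * α / (a:ℝ)^2) := by
      rw [neg_mul, neg_div, ← sub_eq_add_neg]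
      have : 2 * α / (a:ℝ)^2 ≤ 8 * α / (a:ℝ)^2 := by
        gcongr <;> nlinarith
      linarith
    linarith
  calc Real.sqrt (Complex.normSq S) ≤ Real.sqrt (Real.exp (-2 * α / (a:ℝ)^2)) := by
        exact Real.sqrt_le_sqrt h1
    _ = Real.exp (-α / (a:ℝ)^2) := by
        rw [← Real.exp_half]
        congr 1
        ring

lemma addChar_map_sum {A M ι : Type*} [AddCommMonoid A] [CommMonoid M]
    (ψ : AddChar A M) (s : Finset ι) (f : ι → A) :
    ψ (∑ i ∈ s, f i) = ∏ i ∈ s, ψ (f i) := by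
  classical
  induction s using Finset.cons_induction with
  | empty => simp
  | cons i s hi ih => rw [Finset.sum_cons, Finset.prod_cons, AddChar.map_add_eq_mul, ih]

lemma aux_main {a n : ℕ} [NeZero a] (ha : 0 < a) {G : Type*} [AddCommGroup G] [Fintype G]
    [DecidableEq G]
    (hexp : ∀ g : G, a • g = 0) {α : ℝ} (hα0 : 0 ≤ α) (hα1 : α ≤ 1) (w : ℕ)
    (F : (Fin n → ZMod a) →+ G)
    (hcode : ∀ σ : Finset (Fin n), σ.card < w → ∀ g : G,
      ∃ v : Fin n → ZMod a, (∀ i ∈ σ, v i = 0) ∧ F v = g)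
    (p : Fin n → ZMod a → ℝ) (hp0 : ∀ i c, 0 ≤ p i c) (hp1 : ∀ i, ∑ c, p i c = 1)
    (hbal : ∀ i (q : ℕ), q.Prime → q ∣ a → ∀ r : ZMod q,
      ∑ c ∈ Finset.univ.filter (fun c : ZMod a => ((c.val : ℕ) : ZMod q) = r), p i c ≤ 1 - α)
    (A : G) :
    |(∑ v ∈ Finset.univ.filter (fun v : Fin n → ZMod a => F v = A), ∏ i, p i (v i))
      - (Fintype.card G : ℝ)⁻¹|
      ≤ ((Fintype.card G - 1 : ℝ) / Fintype.card G) * Real.exp (-α * w / (a:ℝ) ^ 2) := by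
  classical
  set PA : ℝ := ∑ v ∈ Finset.univ.filter (fun v : Fin n → ZMod a => F v = A), ∏ i, p i (v i)
    with hPAdef
  set h : Fin n → G := fun i => F (Pi.single i 1) with hhdef
  -- factorization of characters
  have hfact : ∀ (ψ : AddChar G ℂ) (v : Fin n → ZMod a),
      ψ (F v) = ∏ i, ψ (h i) ^ (v i).val := by
    intro ψ v
    have hFv : F v = ∑ i, (v i).val • h i := by
      conv_lhs => rw [← Finset.univ_sum_single v, map_sum]
      refine Finset.sum_congr rfl fun i _ => ?_
      have h2 : v i = (v i).val • (1 : ZMod a) := by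
        rw [nsmul_eq_mul, mul_one, ZMod.natCast_val, ZMod.cast_id]
      calc F (Pi.single i (v i))
          = F (AddMonoidHom.single (fun _ : Fin n => ZMod a) i ((v i).val • (1 : ZMod a))) := by
            rw [← h2]; rfl
        _ = (v i).val • F (AddMonoidHom.single (fun _ : Fin n => ZMod a) i 1) := by
            rw [map_nsmul, map_nsmul]
        _ = (v i).val • h i := rfl
    rw [hFv, addChar_map_sum]
    refine Finset.prod_congr rfl fun i _ => ?_
    rw [AddChar.map_nsmul_eq_pow]
  set S : AddChar G ℂ → Fin n → ℂ := fun ψ i => ∑ c : ZMod a, (p i c : ℂ) * ψ (h i) ^ c.val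
    with hSdef
  -- product formula
  have hsum : ∀ ψ : AddChar G ℂ,
      ∑ v : Fin n → ZMod a, (∏ i, (p i (v i) : ℂ)) * ψ (F v) = ∏ i, S ψ i := by
    intro ψ
    have hps := Finset.prod_univ_sum (fun _ : Fin n => (Finset.univ : Finset (ZMod a)))
      (fun i c => (p i c : ℂ) * ψ (h i) ^ c.val)
    rw [Fintype.piFinset_univ] at hps
    rw [hSdef]
    simp only []
    rw [hps]
    refine Finset.sum_congr rfl fun v _ => ?_
    rw [hfact ψ v, ← Finset.prod_mul_distrib]
  -- characters have modulus 1
  have hppow : ∀ (ψ : AddChar G ℂ) (g : G), ψ g ^ a = 1 := by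
    intro ψ g
    rw [← AddChar.map_nsmul_eq_pow, hexp, AddChar.map_zero_eq_one]
  have habs1 : ∀ (ψ : AddChar G ℂ) (g : G), ‖ψ g‖ = 1 := fun ψ g =>
    aux_abs_one ha (hppow ψ g)
  -- orthogonality identity
  have hid : ((Fintype.card G : ℂ)) * (PA : ℂ) = ∑ ψ : AddChar G ℂ, ψ (-A) * ∏ i, S ψ i := by
    have step1 : ∀ ψ : AddChar G ℂ, ψ (-A) * ∏ i, S ψ i =
        ∑ v : Fin n → ZMod a, (∏ i, (p i (v i) : ℂ)) * ψ (F v - A) := by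
      intro ψ
      rw [← hsum ψ, Finset.mul_sum]
      refine Finset.sum_congr rfl fun v _ => ?_
      rw [sub_eq_add_neg, AddChar.map_add_eq_mul]
      ring
    rw [Finset.sum_congr rfl fun ψ _ => step1 ψ, Finset.sum_comm]
    have step2 : ∀ v : Fin n → ZMod a,
        ∑ ψ : AddChar G ℂ, (∏ i, (p i (v i) : ℂ)) * ψ (F v - A) =
        (∏ i, (p i (v i) : ℂ)) * (if F v = A then (Fintype.card G : ℂ) else 0) := by
      intro v
      rw [← Finset.mul_sum, AddChar.sum_apply_eq_ite]
      congr 1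
      simp [sub_eq_zero]
    rw [Finset.sum_congr rfl fun v _ => step2 v]
    simp only [mul_ite, mul_zero]
    rw [← Finset.sum_filter, ← Finset.sum_mul, mul_comm, hPAdef]
    push_cast
    rfl
  -- split off trivial character
  have hS1 : ∀ i, S 1 i = 1 := by
    intro i
    rw [hSdef]
    simp only [AddChar.one_apply, one_pow, mul_one]
    rw [← Complex.ofReal_sum, hp1 i, Complex.ofReal_one]
  have hsplit : ((Fintype.card G : ℂ)) * (PA : ℂ) - 1 =
      ∑ ψ ∈ Finset.univ.erase (1 : AddChar G ℂ), ψ (-A) * ∏ i, S ψ i := by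
    rw [hid, ← Finset.add_sum_erase _ _ (Finset.mem_univ (1 : AddChar G ℂ))]
    have : (1 : AddChar G ℂ) (-A) * ∏ i, S 1 i = 1 := by
      rw [AddChar.one_apply]
      rw [Finset.prod_congr rfl fun i _ => hS1 i]
      simp
    rw [this]
    ring
  -- bound each nontrivial character term
  have hbound : ∀ ψ : AddChar G ℂ, ψ ≠ 1 →
      ‖ψ (-A) * ∏ i, S ψ i‖ ≤ Real.exp (-α * w / (a:ℝ) ^ 2) := by
    intro ψ hψ
    have hSle1 : ∀ i, ‖S ψ i‖ ≤ 1 := by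
      intro i
      refine le_trans (norm_sum_le _ _) ?_
      have habsc : ∀ c : ZMod a, ‖(p i c : ℂ) * ψ (h i) ^ c.val‖ = p i c := by
        intro c
        rw [norm_mul, norm_pow, habs1, one_pow, mul_one, Complex.norm_real, Real.norm_eq_abs,
          abs_of_nonneg (hp0 i c)]
      rw [Finset.sum_congr rfl fun c _ => habsc c, hp1 i]
    have hSgood : ∀ i, ψ (h i) ≠ 1 → ‖S ψ i‖ ≤ Real.exp (-α / (a:ℝ)^2) := by
      intro i hne
      exact aux_char_sum ha hα0 hα1 (p i) (hp0 i) (hp1 i) (hppow ψ (h i)) hne (hbal i)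
    set σ : Finset (Fin n) := Finset.univ.filter (fun i => ψ (h i) ≠ 1) with hσ
    have hwσ : w ≤ σ.card := by
      by_contra hlt
      push_neg at hlt
      apply hψ
      ext g
      rw [AddChar.one_apply]
      obtain ⟨v, hv0, hvF⟩ := hcode σ hlt g
      rw [← hvF, hfact]
      refine Finset.prod_eq_one fun i _ => ?_
      by_cases hiσ : i ∈ σ
      · rw [hv0 i hiσ]
        simp [ZMod.val_zero]
      · have hone : ψ (h i) = 1 := by
          by_contra hne
          exact hiσ (Finset.mem_filter.mpr ⟨Finset.mem_univ i, hne⟩)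
        rw [hone, one_pow]
    have hexp1 : Real.exp (-α / (a:ℝ)^2) ≤ 1 := by
      rw [Real.exp_le_one_iff, neg_div]
      have h2 : (0:ℝ) ≤ α / (a:ℝ)^2 := div_nonneg hα0 (by positivity)
      linarith
    rw [norm_mul, habs1, one_mul, norm_prod]
    calc ∏ i, ‖S ψ i‖
        ≤ ∏ i ∈ σ, ‖S ψ i‖ := by
          rw [← Finset.prod_filter_mul_prod_filter_not Finset.univ (fun i => ψ (h i) ≠ 1)]
          have h2 : ∏ i ∈ Finset.univ.filter (fun i => ¬ ψ (h i) ≠ 1),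
              ‖S ψ i‖ ≤ 1 :=
            Finset.prod_le_one (fun i _ => norm_nonneg _) (fun i _ => hSle1 i)
          have h1 : 0 ≤ ∏ i ∈ σ, ‖S ψ i‖ :=
            Finset.prod_nonneg fun i _ => norm_nonneg _
          exact mul_le_of_le_one_right h1 h2
      _ ≤ ∏ _i ∈ σ, Real.exp (-α / (a:ℝ)^2) := by
          refine Finset.prod_le_prod (fun i _ => norm_nonneg _) (fun i hi => ?_)
          exact hSgood i (Finset.mem_filter.mp hi).2
      _ = Real.exp (-α / (a:ℝ)^2) ^ σ.card := by rw [Finset.prod_const]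
      _ ≤ Real.exp (-α / (a:ℝ)^2) ^ w :=
          pow_le_pow_of_le_one (Real.exp_nonneg _) hexp1 hwσ
      _ = Real.exp (-α * w / (a:ℝ)^2) := by
          rw [← Real.exp_nat_mul]
          congr 1
          ring
  -- total bound
  have htotal : ‖((Fintype.card G : ℂ)) * (PA : ℂ) - 1‖
      ≤ ((Fintype.card G : ℝ) - 1) * Real.exp (-α * w / (a:ℝ) ^ 2) := by
    rw [hsplit]
    refine le_trans (norm_sum_le _ _) ?_
    have hcard : (Finset.univ.erase (1 : AddChar G ℂ)).card = Fintype.card G - 1 := by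
      rw [Finset.card_erase_of_mem (Finset.mem_univ _), Finset.card_univ, AddChar.card_eq]
    calc ∑ ψ ∈ Finset.univ.erase (1 : AddChar G ℂ), ‖ψ (-A) * ∏ i, S ψ i‖
        ≤ ∑ ψ ∈ Finset.univ.erase (1 : AddChar G ℂ), Real.exp (-α * w / (a:ℝ) ^ 2) :=
          Finset.sum_le_sum fun ψ hψ => hbound ψ (Finset.mem_erase.mp hψ).1
      _ = ((Finset.univ.erase (1 : AddChar G ℂ)).card : ℝ) * Real.exp (-α * w / (a:ℝ)^2) := by
          rw [Finset.sum_const, nsmul_eq_mul]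
      _ = ((Fintype.card G : ℝ) - 1) * Real.exp (-α * w / (a:ℝ)^2) := by
          rw [hcard]
          have hpos : 1 ≤ Fintype.card G := Fintype.card_pos
          rw [Nat.cast_sub hpos, Nat.cast_one]
  have hreal : ‖((Fintype.card G : ℂ)) * (PA : ℂ) - 1‖
      = |(Fintype.card G : ℝ) * PA - 1| := by
    rw [show ((Fintype.card G : ℂ)) * (PA : ℂ) - 1
        = (((Fintype.card G : ℝ) * PA - 1 : ℝ) : ℂ) by push_cast; ring,
      Complex.norm_real, Real.norm_eq_abs]
  rw [hreal] at htotal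
  have hcard0 : (0:ℝ) < (Fintype.card G : ℝ) := by exact_mod_cast Fintype.card_pos
  have hmul : (Fintype.card G : ℝ) * (PA - (Fintype.card G : ℝ)⁻¹)
      = (Fintype.card G : ℝ) * PA - 1 := by
    field_simp
  have key : |PA - (Fintype.card G : ℝ)⁻¹|
      = |(Fintype.card G : ℝ) * PA - 1| / (Fintype.card G : ℝ) := by
    rw [← hmul, abs_mul, abs_of_pos hcard0, mul_comm, mul_div_assoc,
      div_self hcard0.ne', mul_one]
  rw [key, show ((Fintype.card G : ℝ) - 1) / (Fintype.card G : ℝ)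
      * Real.exp (-α * w / (a:ℝ)^2)
      = (((Fintype.card G : ℝ) - 1) * Real.exp (-α * w / (a:ℝ)^2)) / (Fintype.card G : ℝ)
      by ring]
  gcongr

/-- Code-column lemma: if `F : (ℤ/aℤ)^n → G` is a code of distance `w` and `X` is the
reduction mod `a` of a random integer vector with independent `α`-balanced entries, then
for every `A ∈ G`, `|P(FX = A) - |G|⁻¹| ≤ ((|G|-1)/|G|) exp(-αw/a²)`. -/
theorem code_column_equidistribution {Ω : Type*} [MeasureSpace Ω]
    [IsProbabilityMeasure (ℙ : Measure Ω)]
    (a n : ℕ) (ha : 0 < a) (hn : 0 < n)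
    {G : Type*} [AddCommGroup G] [Fintype G]
    (hexp : ∀ g : G, a • g = 0)
    (α : ℝ) (hα0 : 0 ≤ α) (hα1 : α ≤ 1)
    (w : ℕ)
    (F : (Fin n → ZMod a) →+ G)
    (hcode : ∀ σ : Finset (Fin n), σ.card < w → ∀ g : G,
      ∃ v : Fin n → ZMod a, (∀ i ∈ σ, v i = 0) ∧ F v = g)
    (Y : Ω → Fin n → ℤ)
    (hmeas : ∀ i, Measurable fun ω => Y ω i)
    (hindep : iIndepFun (fun i ω => Y ω i) ℙ)
    (hbal : ∀ i (p : ℕ), p.Prime → ∀ r : ZMod p,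
      ℙ {ω | ((Y ω i : ℤ) : ZMod p) = r} ≤ ENNReal.ofReal (1 - α))
    (A : G) :
    |(ℙ {ω | F (fun i => ((Y ω i : ℤ) : ZMod a)) = A}).toReal - (Fintype.card G : ℝ)⁻¹|
      ≤ ((Fintype.card G - 1 : ℝ) / Fintype.card G) * Real.exp (-α * w / a ^ 2) := by
  classical
  haveI : NeZero a := ⟨ha.ne'⟩
  set X : Ω → Fin n → ZMod a := fun ω i => ((Y ω i : ℤ) : ZMod a) with hX
  set E : Fin n → ZMod a → Set Ω :=
    fun i c => (fun ω => Y ω i) ⁻¹' {x : ℤ | (x : ZMod a) = c} with hE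
  have hEmeas : ∀ i c, MeasurableSet (E i c) := fun i c => (hmeas i) trivial
  have hXv : ∀ v : Fin n → ZMod a, MeasurableSet {ω | X ω = v} := by
    intro v
    have : {ω | X ω = v} = ⋂ i, E i (v i) := by
      ext ω
      simp only [Set.mem_setOf_eq, Set.mem_iInter, hE, Set.mem_preimage, hX, funext_iff]
    rw [this]
    exact MeasurableSet.iInter fun i => hEmeas i (v i)
  have hprod : ∀ v : Fin n → ZMod a, ℙ {ω | X ω = v} = ∏ i, ℙ (E i (v i)) := by
    intro v
    have hset : {ω | X ω = v}
        = ⋂ i ∈ Finset.univ, (fun ω => Y ω i) ⁻¹' {x : ℤ | (x : ZMod a) = v i} := by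
      ext ω
      simp only [Set.mem_setOf_eq, Set.mem_iInter, Set.mem_preimage, funext_iff, hX,
        Finset.mem_univ, Set.iInter_true]
    rw [hset]
    exact hindep.measure_inter_preimage_eq_mul Finset.univ (fun i _ => trivial)
  -- decomposition of the event
  have hdecomp : ℙ {ω | F (fun i => ((Y ω i : ℤ) : ZMod a)) = A}
      = ∑ v ∈ Finset.univ.filter (fun v : Fin n → ZMod a => F v = A), ℙ {ω | X ω = v} := by
    have hset : {ω | F (fun i => ((Y ω i : ℤ) : ZMod a)) = A}
        = ⋃ v ∈ Finset.univ.filter (fun v : Fin n → ZMod a => F v = A), {ω | X ω = v} := by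
      ext ω
      simp only [Set.mem_setOf_eq, Set.mem_iUnion, Finset.mem_filter, Finset.mem_univ, true_and]
      constructor
      · intro hA
        exact ⟨X ω, hA, rfl⟩
      · rintro ⟨v, hv, hvω⟩
        rw [show (fun i => ((Y ω i : ℤ) : ZMod a)) = X ω from rfl, hvω]
        exact hv
    rw [hset]
    refine measure_biUnion_finset ?_ (fun v _ => hXv v)
    intro v hv v' hv' hne
    simp only [Function.onFun]
    rw [Set.disjoint_left]
    intro ω hω hω'
    exact hne (hω ▸ hω' ▸ rfl)
  -- the probability vector
  set p : Fin n → ZMod a → ℝ := fun i c => (ℙ (E i c)).toReal with hp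
  have hfin : ∀ i c, ℙ (E i c) ≠ ⊤ := fun i c => measure_ne_top ℙ _
  have hp0 : ∀ i c, 0 ≤ p i c := fun i c => ENNReal.toReal_nonneg
  have hpartition : ∀ (i : Fin n) (s : Finset (ZMod a)),
      ∑ c ∈ s, ℙ (E i c) = ℙ ((fun ω => Y ω i) ⁻¹' {x : ℤ | (x : ZMod a) ∈ s}) := by
    intro i s
    have hset : ((fun ω => Y ω i) ⁻¹' {x : ℤ | (x : ZMod a) ∈ s}) = ⋃ c ∈ s, E i c := by
      ext ω
      constructor
      · intro hc
        exact Set.mem_iUnion₂.mpr ⟨_, hc, rfl⟩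
      · intro hmem
        obtain ⟨c, hc, hωc⟩ := Set.mem_iUnion₂.mp hmem
        show ((Y ω i : ℤ) : ZMod a) ∈ s
        have hceq : ((Y ω i : ℤ) : ZMod a) = c := hωc
        rw [hceq]; exact hc
    rw [hset]
    refine (measure_biUnion_finset ?_ (fun c _ => hEmeas i c)).symm
    intro c hc c' hc' hne
    simp only [Function.onFun]
    rw [Set.disjoint_left]
    intro ω hω hω'
    simp only [hE, Set.mem_preimage, Set.mem_setOf_eq] at hω hω'
    exact hne (hω ▸ hω' ▸ rfl)
  have hp1 : ∀ i, ∑ c, p i c = 1 := by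
    intro i
    have h1 : ∑ c, ℙ (E i c) = 1 := by
      rw [hpartition i Finset.univ]
      have : ((fun ω => Y ω i) ⁻¹' {x : ℤ | (x : ZMod a) ∈ Finset.univ}) = Set.univ := by
        ext ω; simp
      rw [this, measure_univ]
    rw [hp]
    rw [← ENNReal.toReal_sum (fun c _ => hfin i c), h1, ENNReal.toReal_one]
  -- balancedness transfer
  have hbal' : ∀ i (q : ℕ), q.Prime → q ∣ a → ∀ r : ZMod q,
      ∑ c ∈ Finset.univ.filter (fun c : ZMod a => ((c.val : ℕ) : ZMod q) = r), p i c ≤ 1 - α := by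
    intro i q hq hqa r
    have hcast : ∀ x : ℤ, (((x : ZMod a).val : ℕ) : ZMod q) = (x : ZMod q) := by
      intro x
      have h1 : (((x : ZMod a).val : ℤ) : ZMod a) = (x : ZMod a) := by
        push_cast
        rw [ZMod.natCast_val, ZMod.cast_id]
      have h2 : ((x : ZMod a).val : ℤ) ≡ x [ZMOD a] := (ZMod.intCast_eq_intCast_iff _ _ _).mp h1
      have h3 : ((x : ZMod a).val : ℤ) ≡ x [ZMOD q] :=
        h2.of_dvd (Int.natCast_dvd_natCast.mpr hqa)
      have h4 : (((x : ZMod a).val : ℤ) : ZMod q) = (x : ZMod q) :=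
        (ZMod.intCast_eq_intCast_iff _ _ _).mpr h3
      rw [← h4]
      push_cast
      rfl
    have hsum : ∑ c ∈ Finset.univ.filter (fun c : ZMod a => ((c.val : ℕ) : ZMod q) = r),
        ℙ (E i c) = ℙ {ω | ((Y ω i : ℤ) : ZMod q) = r} := by
      rw [hpartition]
      congr 1
      ext ω
      simp only [Set.mem_preimage, Set.mem_setOf_eq, Finset.mem_filter, Finset.mem_univ, true_and]
      rw [hcast (Y ω i)]
    have hle := hbal i q hq r
    rw [← hsum] at hle
    calc ∑ c ∈ Finset.univ.filter (fun c : ZMod a => ((c.val : ℕ) : ZMod q) = r), p i c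
        = (∑ c ∈ Finset.univ.filter (fun c : ZMod a => ((c.val : ℕ) : ZMod q) = r),
            ℙ (E i c)).toReal := by
          rw [hp, ENNReal.toReal_sum (fun c _ => hfin i c)]
      _ ≤ (ENNReal.ofReal (1 - α)).toReal := by
          exact ENNReal.toReal_mono ENNReal.ofReal_ne_top hle
      _ = 1 - α := ENNReal.toReal_ofReal (by linarith)
  -- convert the goal
  have hgoal : (ℙ {ω | F (fun i => ((Y ω i : ℤ) : ZMod a)) = A}).toReal
      = ∑ v ∈ Finset.univ.filter (fun v : Fin n → ZMod a => F v = A), ∏ i, p i (v i) := by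
    rw [hdecomp, ENNReal.toReal_sum]
    · refine Finset.sum_congr rfl fun v _ => ?_
      rw [hprod v, ENNReal.toReal_prod]
    · intro v _
      rw [hprod v]
      exact (ENNReal.prod_lt_top (fun i _ => (hfin i (v i)).lt_top)).ne
  rw [hgoal]
  exact aux_main ha hexp hα0 hα1 w F hcode p hp0 hp1 hbal' A
end

section
/- Let δ > 0, a, n positive integers, G a finite abelian group of exponent dividing a, and V = (ℤ/aℤ)^n with standard basis v_1,...,v_n. Suppose F ∈ Hom(V,G) is δ-robust for a subgroup H of G, meaning H is a minimal subgroup such that #{i ∈ [n] : F(v_i) ∉ H} ≤ ℓ([G:H])·δn, where ℓ(D) is the number of prime factors of D counted with multiplicity. Let π = {i ∈ [n] : F(v_i) ∉ H}. Then F restricted to the coordinates outside π is a code of distance δn in Hom(V_{∖π}, H), i.e., surjects onto H even after deleting any fewer than δn of the remaining coordinates. -/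
open scoped Classical

/-- If `F : (ℤ/aℤ)^n → G` is `δ`-robust for a subgroup `H` of `G`, and
`π = {i : F(v_i) ∉ H}`, then `F` restricted to the coordinates outside `π` is a code of
distance `δn` with values in `H`. -/
theorem robust_restriction_is_code (δ : ℝ) (hδ : 0 < δ) (a n : ℕ) (ha : 0 < a) (hn : 0 < n)
    {G : Type*} [AddCommGroup G] [Fintype G] (hexp : ∀ g : G, a • g = 0)
    (F : (Fin n → ZMod a) →+ G) (H : AddSubgroup G)
    (hrob : ((Finset.univ.filter fun i : Fin n => F (Pi.single i 1) ∉ H).card : ℝ)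
      ≤ (Nat.primeFactorsList H.index).length * (δ * n))
    (hmin : ∀ H' : AddSubgroup G, H' < H →
      ¬ (((Finset.univ.filter fun i : Fin n => F (Pi.single i 1) ∉ H').card : ℝ)
        ≤ (Nat.primeFactorsList H'.index).length * (δ * n))) :
    ∀ σ : Finset (Fin n), (σ.card : ℝ) < δ * n → ∀ h ∈ H,
      ∃ v : Fin n → ZMod a, (∀ i ∈ σ, v i = 0) ∧
        (∀ i : Fin n, F (Pi.single i 1) ∉ H → v i = 0) ∧ F v = h := by
  intro σ hσ h hh
  let W : AddSubgroup (Fin n → ZMod a) :=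
  { carrier := {v | (∀ i ∈ σ, v i = 0) ∧ ∀ i : Fin n, F (Pi.single i 1) ∉ H → v i = 0}
    zero_mem' := ⟨fun i _ => rfl, fun i _ => rfl⟩
    add_mem' := by
      rintro x y ⟨hx1, hx2⟩ ⟨hy1, hy2⟩
      exact ⟨fun i hi => by simp [hx1 i hi, hy1 i hi],
             fun i hi => by simp [hx2 i hi, hy2 i hi]⟩
    neg_mem' := by
      rintro x ⟨hx1, hx2⟩
      exact ⟨fun i hi => by simp [hx1 i hi], fun i hi => by simp [hx2 i hi]⟩ }
  suffices hHK : H ≤ (W.map F) ⊓ H by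
    obtain ⟨v, hv, hFv⟩ := (hHK hh).1
    exact ⟨v, hv.1, hv.2, hFv⟩
  by_contra hcon
  set H' : AddSubgroup G := (W.map F) ⊓ H with hH'
  have hle : H' ≤ H := inf_le_right
  have hlt : H' < H := lt_of_le_of_ne hle fun heq => hcon heq.ge
  refine hmin H' hlt ?_
  -- counting
  have hsub : (Finset.univ.filter fun i : Fin n => F (Pi.single i 1) ∉ H')
      ⊆ (Finset.univ.filter fun i : Fin n => F (Pi.single i 1) ∉ H) ∪ σ := by
    intro i hi
    simp only [Finset.mem_filter, Finset.mem_univ, true_and] at hi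
    by_contra hcontra
    simp only [Finset.mem_union, Finset.mem_filter, Finset.mem_univ, true_and,
      not_or, not_not] at hcontra
    obtain ⟨hiH, hiσ⟩ := hcontra
    apply hi
    refine ⟨AddSubgroup.mem_map.mpr ⟨Pi.single i 1, ?_, rfl⟩, hiH⟩
    constructor
    · intro j hj
      exact Pi.single_eq_of_ne (fun hji : j = i => hiσ (hji ▸ hj)) 1
    · intro j hj
      rcases eq_or_ne j i with rfl | hne
      · exact absurd hiH hj
      · exact Pi.single_eq_of_ne hne 1
  have hcard : (Finset.univ.filter fun i : Fin n => F (Pi.single i 1) ∉ H').card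
      ≤ (Finset.univ.filter fun i : Fin n => F (Pi.single i 1) ∉ H).card + σ.card :=
    le_trans (Finset.card_le_card hsub) (Finset.card_union_le _ _)
  -- index facts
  have hHne : H.index ≠ 0 := H.index_ne_zero_of_finite
  have hH'ne : H'.index ≠ 0 := H'.index_ne_zero_of_finite
  have hrel : H'.relIndex H * H.index = H'.index := AddSubgroup.relIndex_mul_index hle
  have hrelne : H'.relIndex H ≠ 0 := by
    intro h0; rw [h0, zero_mul] at hrel; exact hH'ne hrel.symm
  have hrelne1 : H'.relIndex H ≠ 1 := by
    intro h1
    exact hlt.ne (le_antisymm hle (AddSubgroup.relIndex_eq_one.mp h1))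
  have hlen : (Nat.primeFactorsList H.index).length + 1
      ≤ (Nat.primeFactorsList H'.index).length := by
    rw [← hrel]
    have := (Nat.perm_primeFactorsList_mul hrelne hHne).length_eq
    rw [this, List.length_append]
    have hne : Nat.primeFactorsList (H'.relIndex H) ≠ [] := by
      intro h0
      rcases (Nat.primeFactorsList_eq_nil _).mp h0 with h0 | h1
      · exact hrelne h0
      · exact hrelne1 h1
    have := List.length_pos_iff.mpr hne
    omega
  -- real arithmetic
  have hδn : (0:ℝ) < δ * n := mul_pos hδ (by exact_mod_cast hn)
  calc ((Finset.univ.filter fun i : Fin n => F (Pi.single i 1) ∉ H').card : ℝ)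
      ≤ ((Finset.univ.filter fun i : Fin n => F (Pi.single i 1) ∉ H).card : ℝ) + σ.card := by
        exact_mod_cast hcard
    _ ≤ (Nat.primeFactorsList H.index).length * (δ * n) + δ * n := by
        exact add_le_add hrob hσ.le
    _ = ((Nat.primeFactorsList H.index).length + 1 : ℝ) * (δ * n) := by ring
    _ ≤ (Nat.primeFactorsList H'.index).length * (δ * n) := by
        apply mul_le_mul_of_nonneg_right _ hδn.le
        exact_mod_cast hlen
end

section
/- Let δ > 0, a, n ≥ 1 integers, G a finite abelian group of exponent dividing a, H a subgroup of G of index D > 1, and H = G_{ℓ(D)} ⊂ ... ⊂ G_1 ⊂ G_0 = G a maximal chain of proper subgroups. The number of homomorphisms F : (ℤ/aℤ)^n → G such that F is δ-robust for H and such that for each 1 ≤ j ≤ ℓ(D) there are exactly w_j indices i ∈ [n] with F(v_i) ∈ G_{j-1} ∖ G_j, is at most |H|^{n - Σ_j w_j} · Π_{j=1}^{ℓ(D)} C(n, w_j) |G_{j-1}|^{w_j}. -/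
open scoped Classical

/-- Count of robust homomorphisms for a subgroup `H` with prescribed layer counts: the number
of `F : (ℤ/aℤ)^n → G` that are `δ`-robust for `H` and have exactly `w j` indices `i` with
`F(v_i) ∈ G_j \ G_{j+1}` along a maximal chain `G = G_0 ⊃ G_1 ⊃ ⋯ ⊃ G_L = H` is at most
`|H|^{n - ∑ w_j} ∏_j C(n, w_j) |G_j|^{w_j}`. -/
theorem count_robust_homs (δ : ℝ) (hδ : 0 < δ) (a n : ℕ) (ha : 0 < a) (hn : 0 < n)
    {G : Type*} [AddCommGroup G] [Fintype G] (hexp : ∀ g : G, a • g = 0)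
    (H : AddSubgroup G) (hD : 1 < H.index)
    (L : ℕ) (hL : L = (Nat.primeFactorsList H.index).length)
    (Gc : ℕ → AddSubgroup G) (hG0 : Gc 0 = ⊤) (hGL : Gc L = H)
    (hchain : ∀ j < L, Gc (j + 1) < Gc j)
    (hmaximal : ∀ j < L, ((Gc (j + 1)).relIndex (Gc j)).Prime)
    (w : ℕ → ℕ) :
    Set.ncard {F : (Fin n → ZMod a) →+ G |
        (((Finset.univ.filter fun i : Fin n => F (Pi.single i 1) ∉ H).card : ℝ)
            ≤ (Nat.primeFactorsList H.index).length * (δ * n)) ∧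
        (∀ H' : AddSubgroup G, H' < H →
          ¬ (((Finset.univ.filter fun i : Fin n => F (Pi.single i 1) ∉ H').card : ℝ)
            ≤ (Nat.primeFactorsList H'.index).length * (δ * n))) ∧
        (∀ j < L, (Finset.univ.filter fun i : Fin n =>
            F (Pi.single i 1) ∈ Gc j ∧ F (Pi.single i 1) ∉ Gc (j + 1)).card = w j)}
      ≤ Nat.card H ^ (n - ∑ j ∈ Finset.range L, w j) *
          ∏ j ∈ Finset.range L, n.choose (w j) * Nat.card (Gc j) ^ (w j) := by
  classical
  haveI : NeZero a := ⟨ha.ne'⟩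
  set W := ∑ j ∈ Finset.range L, w j with hWdef
  set Tset : ((Fin n → ZMod a) →+ G) → Finset (Fin n) :=
    (fun F => Finset.univ.filter fun i : Fin n => F (Pi.single i 1) ∈ H) with hTset
  set Sset : ((Fin n → ZMod a) →+ G) → ℕ → Finset (Fin n) :=
    (fun F j => Finset.univ.filter fun i : Fin n =>
      F (Pi.single i 1) ∈ Gc j ∧ F (Pi.single i 1) ∉ Gc (j + 1)) with hSset
  -- monotonicity of the chain
  have hmono : ∀ j k : ℕ, j ≤ k → k ≤ L → Gc k ≤ Gc j := by
    intro j k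
    induction k with
    | zero => intro hjk _; obtain rfl := Nat.le_zero.mp hjk; exact le_rfl
    | succ m ih =>
      intro hjk hkL
      rcases Nat.eq_or_lt_of_le hjk with rfl | h
      · exact le_rfl
      · exact le_trans (hchain m (by omega)).le (ih (by omega) (by omega))
  have hclass : ∀ x : G, (∀ j < L, ¬(x ∈ Gc j ∧ x ∉ Gc (j + 1))) → x ∈ H := by
    intro x hx
    have hall : ∀ j, j ≤ L → x ∈ Gc j := by
      intro j
      induction j with
      | zero => intro _; rw [hG0]; trivial
      | succ m ih =>
        intro hm
        by_contra hmem
        exact hx m (by omega) ⟨ih (by omega), hmem⟩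
    rw [← hGL]; exact hall L le_rfl
  have hclass' : ∀ x : G, x ∈ H → ∀ j, j < L → x ∈ Gc (j + 1) := by
    intro x hx j hj
    exact hmono (j + 1) L (by omega) le_rfl (show x ∈ Gc L by rw [hGL]; exact hx)
  have hembcong : ∀ (m : ℕ) (s t : Finset (Fin n)) (hs : s.card = m) (ht : t.card = m),
      s = t → ∀ k : Fin m, s.orderEmbOfFin hs k = t.orderEmbOfFin ht k := by
    rintro m s t hs ht rfl k; rfl
  -- cardinality of the H-layer
  have hTcard : ∀ F : (Fin n → ZMod a) →+ G,
      (∀ j < L, (Sset F j).card = w j) → (Tset F).card = n - W ∧ W ≤ n := by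
    intro F hw
    simp only [hSset] at hw
    have hdisj : ∀ j1 ∈ Finset.range L, ∀ j2 ∈ Finset.range L, j1 ≠ j2 →
        Disjoint (Finset.univ.filter fun i : Fin n =>
            F (Pi.single i 1) ∈ Gc j1 ∧ F (Pi.single i 1) ∉ Gc (j1 + 1))
          (Finset.univ.filter fun i : Fin n =>
            F (Pi.single i 1) ∈ Gc j2 ∧ F (Pi.single i 1) ∉ Gc (j2 + 1)) := by
      have key : ∀ j1 j2 : ℕ, j1 < j2 → j2 < L →
          Disjoint (Finset.univ.filter fun i : Fin n =>
              F (Pi.single i 1) ∈ Gc j1 ∧ F (Pi.single i 1) ∉ Gc (j1 + 1))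
            (Finset.univ.filter fun i : Fin n =>
              F (Pi.single i 1) ∈ Gc j2 ∧ F (Pi.single i 1) ∉ Gc (j2 + 1)) := by
        intro j1 j2 h12 h2L
        rw [Finset.disjoint_left]
        intro i hi1 hi2
        rw [Finset.mem_filter] at hi1 hi2
        exact hi1.2.2 (hmono (j1 + 1) j2 (by omega) (by omega) hi2.2.1)
      intro j1 h1 j2 h2 hne
      rcases lt_or_gt_of_ne hne with h | h
      · exact key j1 j2 h (Finset.mem_range.mp h2)
      · exact (key j2 j1 h (Finset.mem_range.mp h1)).symm
    have hunion : (Finset.univ.filter fun i : Fin n => F (Pi.single i 1) ∈ H) ∪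
        ((Finset.range L).biUnion fun j => Finset.univ.filter fun i : Fin n =>
          F (Pi.single i 1) ∈ Gc j ∧ F (Pi.single i 1) ∉ Gc (j + 1)) = Finset.univ := by
      ext i
      simp only [Finset.mem_union, Finset.mem_biUnion, Finset.mem_filter, Finset.mem_univ,
        true_and, Finset.mem_range, iff_true]
      by_cases hc : ∀ j < L, ¬(F (Pi.single i 1) ∈ Gc j ∧ F (Pi.single i 1) ∉ Gc (j + 1))
      · exact Or.inl (hclass _ hc)
      · push_neg at hc
        obtain ⟨j, hj, h1, h2⟩ := hc
        exact Or.inr ⟨j, hj, h1, h2⟩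
    have hdTB : Disjoint (Finset.univ.filter fun i : Fin n => F (Pi.single i 1) ∈ H)
        ((Finset.range L).biUnion fun j => Finset.univ.filter fun i : Fin n =>
          F (Pi.single i 1) ∈ Gc j ∧ F (Pi.single i 1) ∉ Gc (j + 1)) := by
      rw [Finset.disjoint_left]
      intro i hi hib
      rw [Finset.mem_filter] at hi
      rw [Finset.mem_biUnion] at hib
      obtain ⟨j, hj, hij⟩ := hib
      rw [Finset.mem_filter] at hij
      exact hij.2.2 (hclass' _ hi.2 j (Finset.mem_range.mp hj))
    have h1 := Finset.card_union_of_disjoint hdTB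
    rw [hunion, Finset.card_biUnion hdisj] at h1
    rw [Finset.sum_congr rfl (fun j hj => hw j (Finset.mem_range.mp hj))] at h1
    simp only [Finset.card_univ, Fintype.card_fin] at h1
    rw [← hWdef] at h1
    simp only [hTset]
    omega
  -- a homomorphism is determined by its values on the standard generators
  have hgen : ∀ F F' : (Fin n → ZMod a) →+ G,
      (∀ i, F (Pi.single i 1) = F' (Pi.single i 1)) → F = F' := by
    intro F F' hFF
    refine AddMonoidHom.ext fun x => ?_
    have hx : ∀ Fh : (Fin n → ZMod a) →+ G, Fh x = ∑ i, (x i).val • Fh (Pi.single i 1) := by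
      intro Fh
      conv_lhs => rw [← Finset.univ_sum_single x]
      rw [map_sum]
      refine Finset.sum_congr rfl fun i _ => ?_
      rw [← map_nsmul]
      congr 1
      funext j
      rcases eq_or_ne j i with rfl | hne
      · have hval : ((x j).val : ZMod a) = x j := ZMod.natCast_rightInverse (x j)
        simp [Pi.single_apply, nsmul_eq_mul, hval]
      · simp [Pi.single_apply, hne]
    rw [hx F, hx F']
    exact Finset.sum_congr rfl fun i _ => by rw [hFF i]
  -- membership helpers
  have hmemT : ∀ (F : (Fin n → ZMod a) →+ G) (hc : (Tset F).card = n - W) (k : Fin (n - W)),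
      F (Pi.single ((Tset F).orderEmbOfFin hc k) 1) ∈ H := by
    intro F hc k
    have h := Finset.orderEmbOfFin_mem (Tset F) hc k
    simp only [hTset, Finset.mem_filter] at h
    exact h.2
  have hmemS : ∀ (F : (Fin n → ZMod a) →+ G) (j : ℕ) (hc : (Sset F j).card = w j)
      (k : Fin (w j)), F (Pi.single ((Sset F j).orderEmbOfFin hc k) 1) ∈ Gc j := by
    intro F j hc k
    have h := Finset.orderEmbOfFin_mem (Sset F j) hc k
    simp only [hSset, Finset.mem_filter] at h
    exact h.2.1
  -- the injection
  let f : ↥{F : (Fin n → ZMod a) →+ G |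
        (((Finset.univ.filter fun i : Fin n => F (Pi.single i 1) ∉ H).card : ℝ)
            ≤ (Nat.primeFactorsList H.index).length * (δ * n)) ∧
        (∀ H' : AddSubgroup G, H' < H →
          ¬ (((Finset.univ.filter fun i : Fin n => F (Pi.single i 1) ∉ H').card : ℝ)
            ≤ (Nat.primeFactorsList H'.index).length * (δ * n))) ∧
        (∀ j < L, (Finset.univ.filter fun i : Fin n =>
            F (Pi.single i 1) ∈ Gc j ∧ F (Pi.single i 1) ∉ Gc (j + 1)).card = w j)} →
      (Fin (n - W) → ↥H) ×
        ((j : Fin L) → {s : Finset (Fin n) // s.card = w j.1} × (Fin (w j.1) → ↥(Gc j.1))) :=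
    fun Fp =>
      ⟨fun k => ⟨Fp.1 (Pi.single ((Tset Fp.1).orderEmbOfFin (hTcard Fp.1 Fp.2.2.2).1 k) 1),
          hmemT Fp.1 (hTcard Fp.1 Fp.2.2.2).1 k⟩,
       fun j => ⟨⟨Sset Fp.1 j.1, Fp.2.2.2 j.1 j.2⟩,
         fun k => ⟨Fp.1 (Pi.single ((Sset Fp.1 j.1).orderEmbOfFin (Fp.2.2.2 j.1 j.2) k) 1),
           hmemS Fp.1 j.1 (Fp.2.2.2 j.1 j.2) k⟩⟩⟩
  have hinj : Function.Injective f := by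
    rintro ⟨F, hF⟩ ⟨F', hF'⟩ h
    have hS : ∀ j : Fin L, Sset F j.1 = Sset F' j.1 := fun j =>
      congrArg (fun q => q.1.1) (congrFun (congrArg Prod.snd h) j)
    have h1 : ∀ k : Fin (n - W),
        F (Pi.single ((Tset F).orderEmbOfFin (hTcard F hF.2.2).1 k) 1) =
        F' (Pi.single ((Tset F').orderEmbOfFin (hTcard F' hF'.2.2).1 k) 1) := fun k =>
      congrArg Subtype.val (congrFun (congrArg Prod.fst h) k)
    have hv : ∀ (j : Fin L) (k : Fin (w j.1)),
        F (Pi.single ((Sset F j.1).orderEmbOfFin (hF.2.2 j.1 j.2) k) 1) =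
        F' (Pi.single ((Sset F' j.1).orderEmbOfFin (hF'.2.2 j.1 j.2) k) 1) := fun j k =>
      congrArg Subtype.val (congrFun (congrArg Prod.snd (congrFun (congrArg Prod.snd h) j)) k)
    refine Subtype.ext (hgen F F' ?_)
    intro i
    by_cases hcase : ∀ j, j < L → i ∉ Sset F j
    · -- the index lies in the H-layer
      have hiH : F (Pi.single i 1) ∈ H := by
        apply hclass
        intro j hj hmem
        exact hcase j hj (by simp only [hSset, Finset.mem_filter]; exact ⟨Finset.mem_univ i, hmem⟩)
      have hTeq : Tset F = Tset F' := by
        ext i'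
        simp only [hTset, Finset.mem_filter, Finset.mem_univ, true_and]
        constructor
        · intro hi'
          apply hclass
          intro j hj hmem
          have hmem' : i' ∈ Sset F' j := by
            simp only [hSset, Finset.mem_filter]; exact ⟨Finset.mem_univ i', hmem⟩
          rw [← hS ⟨j, hj⟩] at hmem'
          simp only [hSset, Finset.mem_filter] at hmem'
          exact hmem'.2.2 (hclass' _ hi' j hj)
        · intro hi'
          apply hclass
          intro j hj hmem
          have hmem' : i' ∈ Sset F j := by
            simp only [hSset, Finset.mem_filter]; exact ⟨Finset.mem_univ i', hmem⟩
          rw [hS ⟨j, hj⟩] at hmem'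
          simp only [hSset, Finset.mem_filter] at hmem'
          exact hmem'.2.2 (hclass' _ hi' j hj)
      have hiT : i ∈ Tset F := by
        simp only [hTset, Finset.mem_filter]; exact ⟨Finset.mem_univ i, hiH⟩
      have hiT' : i ∈ Set.range ((Tset F).orderEmbOfFin (hTcard F hF.2.2).1) := by
        rw [Finset.range_orderEmbOfFin]; exact hiT
      obtain ⟨k, hk⟩ := hiT'
      rw [← hk, h1 k,
        hembcong (n - W) (Tset F') (Tset F) (hTcard F' hF'.2.2).1 (hTcard F hF.2.2).1 hTeq.symm k]
    · push_neg at hcase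
      obtain ⟨j, hj, hij⟩ := hcase
      have hij' : i ∈ Set.range ((Sset F j).orderEmbOfFin (hF.2.2 j hj)) := by
        rw [Finset.range_orderEmbOfFin]; exact hij
      obtain ⟨k, hk⟩ := hij'
      rw [← hk, hv ⟨j, hj⟩ k,
        hembcong (w j) (Sset F' j) (Sset F j) (hF'.2.2 j hj) (hF.2.2 j hj) (hS ⟨j, hj⟩).symm k]
  -- cardinality of the target
  have hΩcard :
      Nat.card ((Fin (n - W) → ↥H) ×
        ((j : Fin L) → {s : Finset (Fin n) // s.card = w j.1} × (Fin (w j.1) → ↥(Gc j.1)))) =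
      Nat.card ↥H ^ (n - W) * ∏ j ∈ Finset.range L, n.choose (w j) * Nat.card ↥(Gc j) ^ (w j) := by
    rw [Nat.card_prod]
    congr 1
    · rw [Nat.card_pi]
      simp
    · rw [Nat.card_pi,
        ← Fin.prod_univ_eq_prod_range (fun j => n.choose (w j) * Nat.card ↥(Gc j) ^ (w j)) L]
      refine Finset.prod_congr rfl fun j _ => ?_
      rw [Nat.card_prod, Nat.card_pi]
      simp [Nat.card_eq_fintype_card, Fintype.card_finset_len]
  rw [← Nat.card_coe_set_eq, ← hΩcard]
  exact Nat.card_le_card_of_injective f hinj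
end

section
/- Let X ∈ (ℤ/pℤ)^n be a random vector with i.i.d. entries that are copies of a random variable ν satisfying max_{r∈ℤ/pℤ} P(ν = r) ≤ 1-α. Suppose w ∈ (ℤ/pℤ)^n has at least n' non-zero coordinates and α ≥ 4/n'. Then for every r ∈ ℤ/pℤ, |P(X·w = r) - 1/p| ≤ 2/√(αn'). -/
open MeasureTheory ProbabilityTheory
open Finset Real

private lemma elo_gauss_sum_le (c : ℝ) (hc : 0 < c) (M : ℕ) :
    ∑ i ∈ Finset.range M, Real.exp (-c * ((i : ℝ) + 1) ^ 2) ≤ Real.sqrt (π / c) / 2 := by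
  have hanti : AntitoneOn (fun x : ℝ => Real.exp (-c * x ^ 2)) (Set.Icc 0 (0 + (M : ℝ))) := by
    intro x hx y hy hxy
    simp only
    apply Real.exp_le_exp.2
    nlinarith [mul_nonneg (mul_nonneg hc.le (sub_nonneg.2 hxy)) (add_nonneg hx.1 hy.1)]
  have h1 := hanti.sum_le_integral
  have h2 : ∑ i ∈ Finset.range M, Real.exp (-c * ((i : ℝ) + 1) ^ 2)
      = ∑ i ∈ Finset.range M, (fun x : ℝ => Real.exp (-c * x ^ 2)) ((0 : ℝ) + ((i + 1 : ℕ) : ℝ)) := by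
    apply Finset.sum_congr rfl; intro i _; push_cast; ring_nf
  rw [h2]
  refine h1.trans ?_
  rw [intervalIntegral.integral_of_le (by positivity)]
  have h3 : ∫ x in Set.Ioc (0:ℝ) (0 + (M:ℝ)), Real.exp (-c * x ^ 2)
      ≤ ∫ x in Set.Ioi (0:ℝ), Real.exp (-c * x ^ 2) := by
    apply MeasureTheory.setIntegral_mono_set
    · exact (integrable_exp_neg_mul_sq hc).integrableOn
    · filter_upwards with x using (Real.exp_pos _).le
    · filter_upwards with x hx using hx.1
  refine h3.trans ?_
  rw [integral_gaussian_Ioi c]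

private lemma elo_cos_bound (x : ℝ) (hx0 : 0 ≤ x) (hx1 : x ≤ 1) :
    Real.cos (2 * π * x) ≤ 1 - 8 * (min x (1 - x)) ^ 2 := by
  have hpi := Real.pi_pos
  have hsin : 2 * min x (1 - x) ≤ Real.sin (π * x) := by
    cases' le_total x (1 - x) with h h
    · have hx2 : x ≤ 1 / 2 := by linarith
      have := Real.mul_le_sin (x := π * x) (by positivity) (by nlinarith)
      rw [min_eq_left h]
      have h2 : 2 / π * (π * x) = 2 * x := by field_simp
      linarith [h2 ▸ this]
    · have hx2 : 1 - x ≤ 1 / 2 := by linarith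
      have h1x : π * x = π - π * (1 - x) := by ring
      rw [h1x, Real.sin_pi_sub, min_eq_right h]
      have := Real.mul_le_sin (x := π * (1 - x)) (by nlinarith) (by nlinarith)
      have h2 : 2 / π * (π * (1 - x)) = 2 * (1 - x) := by field_simp
      linarith [h2 ▸ this]
  have hy0 : 0 ≤ min x (1 - x) := le_min hx0 (by linarith)
  have hsq : (2 * min x (1 - x)) ^ 2 ≤ Real.sin (π * x) ^ 2 := by
    apply sq_le_sq' _ hsin; nlinarith
  have hid : Real.sin (π * x) ^ 2 = 1 / 2 - Real.cos (2 * (π * x)) / 2 :=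
    Real.sin_sq_eq_half_sub (π * x)
  have h3 : 2 * (π * x) = 2 * π * x := by ring
  rw [h3] at hid
  nlinarith [hsq, hid]

private lemma elo_amgm {ι : Type*} (k : ℕ) (hk : 0 < k) (s : Finset ι) (hs : s.card = k)
    (y : ι → ℝ) (hy : ∀ i ∈ s, 0 ≤ y i) :
    ∏ i ∈ s, y i ≤ (∑ i ∈ s, y i ^ k) / k := by
  have hw : ∀ i ∈ s, (0:ℝ) ≤ 1 / k := fun i _ => by positivity
  have hw' : ∑ _i ∈ s, (1 / k : ℝ) = 1 := by
    rw [Finset.sum_const, hs, nsmul_eq_mul, mul_one_div, div_self (Nat.cast_ne_zero.2 hk.ne')]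
  have hz : ∀ i ∈ s, (0:ℝ) ≤ y i ^ k := fun i hi => pow_nonneg (hy i hi) k
  have := Real.geom_mean_le_arith_mean_weighted s (fun _ => 1 / k) (fun i => y i ^ k) hw hw' hz
  have heq : ∏ i ∈ s, (y i ^ k) ^ (1 / k : ℝ) = ∏ i ∈ s, y i := by
    apply Finset.prod_congr rfl
    intro i hi
    rw [← Real.rpow_natCast (y i) k, ← Real.rpow_mul (hy i hi)]
    rw [mul_one_div, div_self (by positivity : (k:ℝ) ≠ 0), Real.rpow_one]
  rw [heq] at this
  refine this.trans ?_
  rw [Finset.sum_div]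
  apply Finset.sum_congr rfl (fun i _ => by ring) |>.le

private lemma elo_jensen_exp {ι : Type*} (s : Finset ι) (u : ι → ℝ) (hu : ∀ i ∈ s, 0 ≤ u i)
    (hsum : ∑ i ∈ s, u i = 1) (g : ι → ℝ) :
    Real.exp (∑ i ∈ s, u i * g i) ≤ ∑ i ∈ s, u i * Real.exp (g i) := by
  have := convexOn_exp.map_sum_le hu hsum (fun i _ => Set.mem_univ (g i))
  simpa [smul_eq_mul] using this

private lemma elo_addChar_sum {A : Type*} [AddCommMonoid A] {ι : Type*}
    (ψ : AddChar A ℂ) (s : Finset ι) (g : ι → A) :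
    ψ (∑ i ∈ s, g i) = ∏ i ∈ s, ψ (g i) := by
  induction s using Finset.cons_induction with
  | empty => simp
  | cons a s ha ih => rw [Finset.sum_cons, Finset.prod_cons, AddChar.map_add_eq_mul, ih]



noncomputable def eloPsi (p : ℕ) (z : ZMod p) : ℝ := (min z.val (p - z.val) : ℝ) / p

noncomputable def eloPhi (p : ℕ) [NeZero p] (q : ZMod p → ℝ) (t : ZMod p) : ℂ :=
  ∑ a, (q a : ℂ) * ZMod.stdAddChar (t * a)

private lemma elo_psi_zero (p : ℕ) [NeZero p] : eloPsi p 0 = 0 := by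
  simp [eloPsi, ZMod.val_zero]

private lemma elo_psi_nonneg (p : ℕ) [NeZero p] (z : ZMod p) : 0 ≤ eloPsi p z := by
  unfold eloPsi
  have h := (ZMod.val_lt z).le
  exact div_nonneg (le_min (Nat.cast_nonneg _)
    (sub_nonneg.2 (by exact_mod_cast h))) (Nat.cast_nonneg _)

private lemma elo_stdAddChar_conj (p : ℕ) [NeZero p] (z : ZMod p) :
    (starRingEnd ℂ) (ZMod.stdAddChar z) = ZMod.stdAddChar (-z) := by
  have h1 : ZMod.stdAddChar z * ZMod.stdAddChar (-z) = 1 := by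
    rw [← AddChar.map_add_eq_mul]; simp
  have h2 : ‖ZMod.stdAddChar z‖ = 1 := by
    rw [ZMod.stdAddChar_apply]; exact Circle.norm_coe _
  have h3 : ZMod.stdAddChar z * (starRingEnd ℂ) (ZMod.stdAddChar z) = 1 := by
    rw [Complex.mul_conj]
    norm_cast
    rw [← Complex.sq_norm, h2]; norm_num
  have hne : ZMod.stdAddChar z ≠ 0 := by
    intro h; rw [h, zero_mul] at h1; exact one_ne_zero h1.symm
  rw [← h3] at h1
  exact mul_left_cancel₀ hne h1.symm

private lemma elo_re_le (p : ℕ) [NeZero p] (z : ZMod p) :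
    (ZMod.stdAddChar z).re ≤ 1 - 8 * eloPsi p z ^ 2 := by
  have hp : 0 < p := Nat.pos_of_ne_zero (NeZero.ne p)
  have hvlt : z.val < p := ZMod.val_lt z
  have hre : (ZMod.stdAddChar z).re = Real.cos (2 * π * ((z.val : ℝ) / p)) := by
    rw [ZMod.stdAddChar_apply, ZMod.toCircle_apply]
    have : 2 * ↑π * Complex.I * (z.val : ℂ) / p
        = ((2 * π * ((z.val : ℝ) / p) : ℝ) : ℂ) * Complex.I := by
      push_cast; field_simp
    rw [this, Complex.exp_ofReal_mul_I_re]
  rw [hre]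
  have hx0 : (0:ℝ) ≤ (z.val : ℝ) / p := by positivity
  have hx1 : (z.val : ℝ) / p ≤ 1 := by
    rw [div_le_one (by positivity)]; exact_mod_cast hvlt.le
  have := elo_cos_bound ((z.val : ℝ) / p) hx0 hx1
  have hmin : min ((z.val : ℝ) / p) (1 - (z.val : ℝ) / p) = eloPsi p z := by
    have h1 : (1 : ℝ) - (z.val : ℝ) / p = ((p : ℝ) - (z.val : ℝ)) / p := by
      field_simp
    rw [h1, min_div_div_right (by positivity : (0:ℝ) ≤ (p:ℝ))]
    rfl
  rw [hmin] at this
  exact this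




private lemma elo_sum_split {ι : Type*} [Fintype ι] [DecidableEq ι] (F : ι × ι → ℝ) :
    ∑ a, ∑ b, F (a, b) = (∑ ab ∈ Finset.univ.offDiag, F ab) + ∑ a, F (a, a) := by
  rw [← Finset.sum_product', ← Finset.diag_union_offDiag (Finset.univ : Finset ι),
    Finset.sum_union (Finset.disjoint_diag_offDiag _), Finset.sum_diag, add_comm]

private lemma elo_phi_pow_le (p : ℕ) [NeZero p] (q : ZMod p → ℝ)
    (hq0 : ∀ a, 0 ≤ q a) (hq1 : ∑ a, q a = 1)
    (α : ℝ) (hα0 : 0 < α) (hqb : ∀ a, q a ≤ 1 - α)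
    (m : ℕ) (t : ZMod p) :
    ‖eloPhi p q t‖ ^ (2 * m)
      ≤ ∑ ab ∈ Finset.univ.offDiag,
          (q ab.1 * q ab.2 / (∑ cd ∈ Finset.univ.offDiag, q cd.1 * q cd.2))
            * Real.exp (-(8 * m * α) * eloPsi p (t * (ab.1 - ab.2)) ^ 2) := by
  classical
  set E := (ZMod.stdAddChar : AddChar (ZMod p) ℂ) with hE
  set Z := eloPhi p q t with hZ
  set Q := ∑ cd ∈ Finset.univ.offDiag, q cd.1 * q cd.2 with hQdef
  set W := ∑ ab ∈ Finset.univ.offDiag,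
    q ab.1 * q ab.2 * eloPsi p (t * (ab.1 - ab.2)) ^ 2 with hWdef
  have hdiagsum : ∑ a : ZMod p, q a * q a ≤ 1 - α := by
    calc ∑ a : ZMod p, q a * q a ≤ ∑ a : ZMod p, (1 - α) * q a := by
          refine Finset.sum_le_sum fun a _ => mul_le_mul_of_nonneg_right (hqb a) (hq0 a)
      _ = 1 - α := by rw [← Finset.mul_sum, hq1, mul_one]
  have hQfull : Q + ∑ a : ZMod p, q a * q a = 1 := by
    have h := elo_sum_split (fun ab : ZMod p × ZMod p => q ab.1 * q ab.2)
    simp only at h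
    rw [← h]
    simp_rw [← Finset.mul_sum, hq1, mul_one, hq1]
  have hQα : α ≤ Q := by linarith
  have hQ0 : 0 < Q := lt_of_lt_of_le hα0 hQα
  -- conjugate
  have hconjZ : (starRingEnd ℂ) Z = ∑ b : ZMod p, ((q b : ℝ) : ℂ) * E (-(t * b)) := by
    rw [hZ]; unfold eloPhi
    rw [map_sum]
    exact Finset.sum_congr rfl fun b _ => by
      rw [map_mul, Complex.conj_ofReal, ← hE, elo_stdAddChar_conj]
  have hZconj : Z * (starRingEnd ℂ) Z
      = ∑ a : ZMod p, ∑ b : ZMod p, ((q a * q b : ℝ) : ℂ) * E (t * (a - b)) := by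
    rw [hconjZ, hZ]; unfold eloPhi
    rw [Finset.sum_mul_sum]
    refine Finset.sum_congr rfl fun a _ => Finset.sum_congr rfl fun b _ => ?_
    have harg : t * (a - b) = t * a + -(t * b) := by ring
    rw [harg, AddChar.map_add_eq_mul]
    push_cast
    ring
  have habsq : ‖Z‖ ^ 2 = (Z * (starRingEnd ℂ) Z).re := by
    rw [Complex.mul_conj, Complex.sq_norm, Complex.ofReal_re]
  have habs2 : ‖Z‖ ^ 2 ≤ 1 - 8 * W := by
    rw [habsq, hZconj]
    rw [Complex.re_sum]
    have hre : ∀ a : ZMod p, (∑ b : ZMod p, ((q a * q b : ℝ) : ℂ) * E (t * (a - b))).re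
        = ∑ b : ZMod p, q a * q b * (E (t * (a - b))).re := by
      intro a
      rw [Complex.re_sum]
      exact Finset.sum_congr rfl fun b _ => Complex.re_ofReal_mul _ _
    rw [Finset.sum_congr rfl fun a _ => hre a]
    have hle : ∑ a : ZMod p, ∑ b : ZMod p, q a * q b * (E (t * (a - b))).re
        ≤ ∑ a : ZMod p, ∑ b : ZMod p, q a * q b * (1 - 8 * eloPsi p (t * (a - b)) ^ 2) := by
      refine Finset.sum_le_sum fun a _ => Finset.sum_le_sum fun b _ => ?_
      exact mul_le_mul_of_nonneg_left (elo_re_le p _) (mul_nonneg (hq0 a) (hq0 b))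
    refine hle.trans ?_
    have h := elo_sum_split
      (fun ab : ZMod p × ZMod p => q ab.1 * q ab.2 * (1 - 8 * eloPsi p (t * (ab.1 - ab.2)) ^ 2))
    simp only at h
    rw [h]
    have hdiag : ∀ a : ZMod p,
        q a * q a * (1 - 8 * eloPsi p (t * (a - a)) ^ 2) = q a * q a := by
      intro a
      rw [sub_self, mul_zero, elo_psi_zero]
      norm_num
    rw [Finset.sum_congr rfl fun a _ => hdiag a]
    have hoff : ∑ ab ∈ Finset.univ.offDiag,
        q ab.1 * q ab.2 * (1 - 8 * eloPsi p (t * (ab.1 - ab.2)) ^ 2) = Q - 8 * W := by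
      rw [hQdef, hWdef, Finset.mul_sum, ← Finset.sum_sub_distrib]
      exact Finset.sum_congr rfl fun ab _ => by ring
    rw [hoff]
    linarith [hQfull]
  -- power chain
  have hW0 : 0 ≤ W := by
    refine Finset.sum_nonneg fun ab _ => ?_
    exact mul_nonneg (mul_nonneg (hq0 _) (hq0 _)) (sq_nonneg _)
  have habs20 : 0 ≤ ‖Z‖ ^ 2 := pow_nonneg (norm_nonneg Z) 2
  have h18W : 0 ≤ 1 - 8 * W := le_trans habs20 habs2
  calc ‖Z‖ ^ (2 * m) = (‖Z‖ ^ 2) ^ m := by rw [← pow_mul]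
    _ ≤ (1 - 8 * W) ^ m := pow_le_pow_left₀ habs20 habs2 m
    _ ≤ Real.exp (-(8 * W)) ^ m := by
        refine pow_le_pow_left₀ h18W ?_ m
        linarith [Real.add_one_le_exp (-(8 * W))]
    _ = Real.exp ((m : ℝ) * -(8 * W)) := (Real.exp_nat_mul _ m).symm
    _ = Real.exp (∑ ab ∈ Finset.univ.offDiag,
          (q ab.1 * q ab.2 / Q) * (-(8 * m * Q) * eloPsi p (t * (ab.1 - ab.2)) ^ 2)) := by
        congr 1
        have : ∀ ab ∈ Finset.univ.offDiag,
            (q ab.1 * q ab.2 / Q) * (-(8 * m * Q) * eloPsi p (t * (ab.1 - ab.2)) ^ 2)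
              = -(8 * (m : ℝ)) * (q ab.1 * q ab.2 * eloPsi p (t * (ab.1 - ab.2)) ^ 2) := by
          intro ab _
          field_simp
        rw [Finset.sum_congr rfl this, ← Finset.mul_sum, ← hWdef]
        ring
    _ ≤ ∑ ab ∈ Finset.univ.offDiag,
          (q ab.1 * q ab.2 / Q) * Real.exp (-(8 * m * Q) * eloPsi p (t * (ab.1 - ab.2)) ^ 2) := by
        refine elo_jensen_exp _ _ (fun ab _ => ?_) ?_ _
        · exact div_nonneg (mul_nonneg (hq0 _) (hq0 _)) hQ0.le
        · rw [← Finset.sum_div, ← hQdef, div_self hQ0.ne']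
    _ ≤ ∑ ab ∈ Finset.univ.offDiag,
          (q ab.1 * q ab.2 / Q) * Real.exp (-(8 * m * α) * eloPsi p (t * (ab.1 - ab.2)) ^ 2) := by
        refine Finset.sum_le_sum fun ab _ => ?_
        refine mul_le_mul_of_nonneg_left ?_ (div_nonneg (mul_nonneg (hq0 _) (hq0 _)) hQ0.le)
        refine Real.exp_le_exp.2 ?_
        have hψ := sq_nonneg (eloPsi p (t * (ab.1 - ab.2)))
        have hm : (0:ℝ) ≤ (m : ℝ) := Nat.cast_nonneg m
        nlinarith [mul_nonneg (mul_nonneg hm hψ) (sub_nonneg.2 hQα)]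

private lemma elo_abs_phi_le_one (p : ℕ) [NeZero p] (q : ZMod p → ℝ)
    (hq0 : ∀ a, 0 ≤ q a) (hq1 : ∑ a, q a = 1) (t : ZMod p) :
    ‖eloPhi p q t‖ ≤ 1 := by
  unfold eloPhi
  refine le_trans (norm_sum_le _ _) ?_
  have h : ∀ a : ZMod p, ‖(q a : ℂ) * ZMod.stdAddChar (t * a)‖ = q a := by
    intro a
    rw [norm_mul, Complex.norm_of_nonneg (hq0 a), ZMod.stdAddChar_apply, Circle.norm_coe,
      mul_one]
  rw [Finset.sum_congr rfl fun a _ => h a, hq1]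

private lemma elo_sum_units (p : ℕ) [Fact p.Prime] (g : ZMod p → ℝ) (c : ZMod p) (hc : c ≠ 0) :
    ∑ s ∈ Finset.univ.erase 0, g (s * c) = ∑ s ∈ Finset.univ.erase 0, g s := by
  refine Finset.sum_nbij' (i := fun s => s * c) (j := fun s => s * c⁻¹) ?_ ?_ ?_ ?_ ?_
  · intro a ha
    simp only [Finset.mem_erase, Finset.mem_univ, and_true] at ha ⊢
    exact mul_ne_zero ha hc
  · intro a ha
    simp only [Finset.mem_erase, Finset.mem_univ, and_true] at ha ⊢
    exact mul_ne_zero ha (inv_ne_zero hc)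
  · intro a _
    field_simp
  · intro a _
    field_simp
  · intro a _
    rfl

private lemma elo_sum_val (p : ℕ) [hp : Fact p.Prime] (c' : ℝ) :
    ∑ s ∈ Finset.univ.erase (0 : ZMod p), Real.exp (-c' * ((s.val : ℝ)) ^ 2)
      = ∑ i ∈ Finset.range (p - 1), Real.exp (-c' * ((i : ℝ) + 1) ^ 2) := by
  haveI : NeZero p := ⟨hp.out.pos.ne'⟩
  have hp2 := hp.out.two_le
  refine Finset.sum_nbij' (i := fun s => s.val - 1) (j := fun k => ((k + 1 : ℕ) : ZMod p))
    ?_ ?_ ?_ ?_ ?_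
  · intro s hs
    simp only [Finset.mem_erase, Finset.mem_univ, and_true] at hs
    have h1 : s.val ≠ 0 := fun h => hs ((ZMod.val_eq_zero s).1 h)
    have h2 := ZMod.val_lt s
    simp only [Finset.mem_range]
    omega
  · intro k hk
    simp only [Finset.mem_range] at hk
    simp only [Finset.mem_erase, Finset.mem_univ, and_true]
    intro h
    have hd := (ZMod.natCast_eq_zero_iff (k + 1) p).1 h
    have := Nat.le_of_dvd (Nat.succ_pos k) hd
    omega
  · intro s hs
    simp only [Finset.mem_erase, Finset.mem_univ, and_true] at hs
    have h1 : s.val ≠ 0 := fun h => hs ((ZMod.val_eq_zero s).1 h)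
    have h2 : s.val - 1 + 1 = s.val := by omega
    simp only [h2, ZMod.natCast_zmod_val]
  · intro k hk
    simp only [Finset.mem_range] at hk
    simp only [ZMod.val_cast_of_lt (by omega : k + 1 < p)]
    omega
  · intro s hs
    simp only [Finset.mem_erase, Finset.mem_univ, and_true] at hs
    have h1 : 1 ≤ s.val := Nat.one_le_iff_ne_zero.2 fun h => hs ((ZMod.val_eq_zero s).1 h)
    congr 2
    have h3 : ((s.val - 1 : ℕ) : ℝ) = (s.val : ℝ) - 1 := by
      rw [Nat.cast_sub h1]; norm_num
    rw [h3]; ring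

private lemma elo_sum_val2 (p : ℕ) [hp : Fact p.Prime] (c' : ℝ) :
    ∑ s ∈ Finset.univ.erase (0 : ZMod p), Real.exp (-c' * ((p : ℝ) - (s.val : ℝ)) ^ 2)
      = ∑ i ∈ Finset.range (p - 1), Real.exp (-c' * ((i : ℝ) + 1) ^ 2) := by
  haveI : NeZero p := ⟨hp.out.pos.ne'⟩
  have hp2 := hp.out.two_le
  refine Finset.sum_nbij' (i := fun s => p - 1 - s.val) (j := fun k => ((p - 1 - k : ℕ) : ZMod p))
    ?_ ?_ ?_ ?_ ?_
  · intro s hs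
    simp only [Finset.mem_erase, Finset.mem_univ, and_true] at hs
    have h1 : s.val ≠ 0 := fun h => hs ((ZMod.val_eq_zero s).1 h)
    have h2 := ZMod.val_lt s
    simp only [Finset.mem_range]
    omega
  · intro k hk
    simp only [Finset.mem_range] at hk
    simp only [Finset.mem_erase, Finset.mem_univ, and_true]
    intro h
    have hd := (ZMod.natCast_eq_zero_iff (p - 1 - k) p).1 h
    have := Nat.le_of_dvd (by omega) hd
    omega
  · intro s hs
    simp only [Finset.mem_erase, Finset.mem_univ, and_true] at hs
    have h1 : s.val ≠ 0 := fun h => hs ((ZMod.val_eq_zero s).1 h)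
    have h2 := ZMod.val_lt s
    have h3 : p - 1 - (p - 1 - s.val) = s.val := by omega
    simp only [h3, ZMod.natCast_zmod_val]
  · intro k hk
    simp only [Finset.mem_range] at hk
    show p - 1 - (((p - 1 - k : ℕ) : ZMod p)).val = k
    rw [ZMod.val_cast_of_lt (by omega : p - 1 - k < p)]
    omega
  · intro s hs
    simp only [Finset.mem_erase, Finset.mem_univ, and_true] at hs
    have h1 : 1 ≤ s.val := Nat.one_le_iff_ne_zero.2 fun h => hs ((ZMod.val_eq_zero s).1 h)
    have h2 := ZMod.val_lt s
    congr 2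
    have h3 : ((p - 1 - s.val : ℕ) : ℝ) = (p : ℝ) - 1 - s.val := by
      rw [Nat.cast_sub (by omega), Nat.cast_sub (by omega)]
      norm_num
    rw [h3]; ring

private lemma elo_G_le (p : ℕ) [hp : Fact p.Prime] (β : ℝ) (hβ : 0 < β) :
    ∑ s ∈ Finset.univ.erase (0 : ZMod p), Real.exp (-β * eloPsi p s ^ 2)
      ≤ Real.sqrt (π / (β / (p : ℝ) ^ 2)) := by
  haveI : NeZero p := ⟨hp.out.pos.ne'⟩
  have hppos : (0:ℝ) < p := by exact_mod_cast hp.out.pos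
  set c' : ℝ := β / (p : ℝ) ^ 2 with hc'
  have hc'0 : 0 < c' := by positivity
  have hterm : ∀ s : ZMod p, Real.exp (-β * eloPsi p s ^ 2)
      ≤ Real.exp (-c' * ((s.val : ℝ)) ^ 2) + Real.exp (-c' * ((p : ℝ) - (s.val : ℝ)) ^ 2) := by
    intro s
    have hval : (s.val : ℝ) ≤ p := by exact_mod_cast (ZMod.val_lt s).le
    have hrw : -β * eloPsi p s ^ 2
        = -c' * (min ((s.val : ℝ)) ((p : ℝ) - (s.val : ℝ))) ^ 2 := by
      unfold eloPsi
      rw [hc']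
      field_simp
    rw [hrw]
    rcases le_total ((s.val : ℝ)) ((p : ℝ) - (s.val : ℝ)) with h | h
    · rw [min_eq_left h]
      exact le_add_of_nonneg_right (Real.exp_pos _).le
    · rw [min_eq_right h]
      exact le_add_of_nonneg_left (Real.exp_pos _).le
  calc ∑ s ∈ Finset.univ.erase (0 : ZMod p), Real.exp (-β * eloPsi p s ^ 2)
      ≤ ∑ s ∈ Finset.univ.erase (0 : ZMod p),
          (Real.exp (-c' * ((s.val : ℝ)) ^ 2) + Real.exp (-c' * ((p : ℝ) - (s.val : ℝ)) ^ 2)) :=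
        Finset.sum_le_sum fun s _ => hterm s
    _ = (∑ s ∈ Finset.univ.erase (0 : ZMod p), Real.exp (-c' * ((s.val : ℝ)) ^ 2))
        + ∑ s ∈ Finset.univ.erase (0 : ZMod p), Real.exp (-c' * ((p : ℝ) - (s.val : ℝ)) ^ 2) :=
        Finset.sum_add_distrib
    _ ≤ Real.sqrt (π / c') / 2 + Real.sqrt (π / c') / 2 := by
        rw [elo_sum_val p c', elo_sum_val2 p c']
        have := elo_gauss_sum_le c' hc'0 (p - 1)
        linarith
    _ = Real.sqrt (π / c') := by ring

private lemma elo_Q_pos (p : ℕ) [NeZero p] (q : ZMod p → ℝ)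
    (hq0 : ∀ a, 0 ≤ q a) (hq1 : ∑ a, q a = 1)
    (α : ℝ) (hα0 : 0 < α) (hqb : ∀ a, q a ≤ 1 - α) :
    0 < ∑ cd ∈ Finset.univ.offDiag, q cd.1 * q cd.2 := by
  have hdiagsum : ∑ a : ZMod p, q a * q a ≤ 1 - α := by
    calc ∑ a : ZMod p, q a * q a ≤ ∑ a : ZMod p, (1 - α) * q a :=
          Finset.sum_le_sum fun a _ => mul_le_mul_of_nonneg_right (hqb a) (hq0 a)
      _ = 1 - α := by rw [← Finset.mul_sum, hq1, mul_one]
  have hQfull : (∑ cd ∈ Finset.univ.offDiag, q cd.1 * q cd.2) + ∑ a : ZMod p, q a * q a = 1 := by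
    have h := elo_sum_split (fun ab : ZMod p × ZMod p => q ab.1 * q ab.2)
    simp only at h
    rw [← h]
    simp_rw [← Finset.mul_sum, hq1, mul_one, hq1]
  linarith

set_option maxHeartbeats 2000000 in
private lemma elo_key (p : ℕ) [hp : Fact p.Prime] (q : ZMod p → ℝ)
    (hq0 : ∀ a, 0 ≤ q a) (hq1 : ∑ a, q a = 1)
    (α : ℝ) (hα0 : 0 < α) (hqb : ∀ a, q a ≤ 1 - α)
    (n n' : ℕ) (hn'4 : 4 ≤ n')
    (w : Fin n → ZMod p) (hw : n' ≤ (Finset.univ.filter (fun i => w i ≠ 0)).card)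
    (r : ZMod p) :
    |(∑ v : Fin n → ZMod p, if ∑ i, v i * w i = r then ∏ i, q (v i) else 0) - 1 / p|
      ≤ 2 / Real.sqrt (α * n') := by
  classical
  haveI : NeZero p := ⟨hp.out.pos.ne'⟩
  have hppos : (0:ℝ) < p := by exact_mod_cast hp.out.pos
  have hpC : (p : ℂ) ≠ 0 := by exact_mod_cast hp.out.pos.ne'
  set E := (ZMod.stdAddChar : AddChar (ZMod p) ℂ) with hE
  set m := n' / 2 with hm
  have hm2 : 2 ≤ m := by omega
  have h2m : 2 * m ≤ n' := by omega
  have h3 : 3 * n' ≤ 8 * m := by omega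
  have hmpos : (0:ℝ) < (m:ℝ) := by exact_mod_cast (by omega : 0 < m)
  have hmR : (0:ℝ) < 2 * ((m:ℕ):ℝ) := by linarith
  set F : Finset (ZMod p) := Finset.univ.erase 0 with hF
  have horth : ∀ b : ZMod p, ∑ ξ : ZMod p, E (ξ * b) = if b = 0 then (p : ℂ) else 0 := by
    intro b
    have h := AddChar.sum_mulShift b (ZMod.isPrimitive_stdAddChar p)
    rw [ZMod.card p] at h
    exact h.trans (by split_ifs <;> simp)
  have hind : ∀ b c : ZMod p,
      (if b = c then (1 : ℂ) else 0) = (1 / p) * ∑ ξ : ZMod p, E (ξ * (b - c)) := by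
    intro b c
    rw [horth (b - c)]
    by_cases h : b = c
    · simp [h, hpC]
    · have h2 : ¬ (b - c = 0) := fun hh => h (sub_eq_zero.1 hh)
      simp [h, h2]
  have hφ0 : eloPhi p q 0 = 1 := by
    unfold eloPhi
    simp only [zero_mul, AddChar.map_zero_eq_one, mul_one]
    rw [← Complex.ofReal_sum, hq1, Complex.ofReal_one]
  set S : ℝ := ∑ v : Fin n → ZMod p, if ∑ i, v i * w i = r then ∏ i, q (v i) else 0 with hS
  have hSC : ((S : ℝ) : ℂ)
      = (1 / p) * ∑ ξ : ZMod p, E (-(ξ * r)) * ∏ i, eloPhi p q (ξ * w i) := by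
    calc ((S : ℝ) : ℂ)
        = ∑ v : Fin n → ZMod p,
            (∏ i, ((q (v i) : ℝ) : ℂ)) * (if ∑ i, v i * w i = r then (1:ℂ) else 0) := by
          rw [hS]
          push_cast
          refine Finset.sum_congr rfl fun v _ => ?_
          split_ifs <;> simp
      _ = ∑ v : Fin n → ZMod p, (∏ i, ((q (v i) : ℝ) : ℂ))
            * ((1 / p) * ∑ ξ : ZMod p, E (ξ * ((∑ i, v i * w i) - r))) := by
          refine Finset.sum_congr rfl fun v _ => ?_
          rw [hind]
      _ = ∑ v : Fin n → ZMod p, ∑ ξ : ZMod p,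
            (1 / (p:ℂ)) * ((∏ i, ((q (v i) : ℝ) : ℂ)) * E (ξ * ((∑ i, v i * w i) - r))) := by
          refine Finset.sum_congr rfl fun v _ => ?_
          rw [Finset.mul_sum, Finset.mul_sum]
          exact Finset.sum_congr rfl fun ξ _ => by ring
      _ = ∑ ξ : ZMod p, ∑ v : Fin n → ZMod p,
            (1 / (p:ℂ)) * ((∏ i, ((q (v i) : ℝ) : ℂ)) * E (ξ * ((∑ i, v i * w i) - r))) :=
          Finset.sum_comm
      _ = (1 / p) * ∑ ξ : ZMod p, ∑ v : Fin n → ZMod p,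
            (∏ i, ((q (v i) : ℝ) : ℂ)) * E (ξ * ((∑ i, v i * w i) - r)) := by
          rw [Finset.mul_sum]
          exact Finset.sum_congr rfl fun ξ _ => by rw [Finset.mul_sum]
      _ = (1 / p) * ∑ ξ : ZMod p, E (-(ξ * r)) * ∏ i, eloPhi p q (ξ * w i) := by
          congr 1
          refine Finset.sum_congr rfl fun ξ _ => ?_
          have hsum : ∀ v : Fin n → ZMod p,
              (∏ i, ((q (v i) : ℝ) : ℂ)) * E (ξ * ((∑ i, v i * w i) - r))
                = E (-(ξ * r)) * ∏ i, ((q (v i) : ℝ) : ℂ) * E ((ξ * w i) * v i) := by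
            intro v
            have harg : ξ * ((∑ i, v i * w i) - r) = (∑ i, (ξ * w i) * v i) + -(ξ * r) := by
              rw [mul_sub, Finset.mul_sum, sub_eq_add_neg]
              congr 1
              exact Finset.sum_congr rfl fun i _ => by ring
            rw [harg, AddChar.map_add_eq_mul, elo_addChar_sum, Finset.prod_mul_distrib]
            ring
          rw [Finset.sum_congr rfl fun v _ => hsum v, ← Finset.mul_sum]
          congr 1
          rw [← Fintype.prod_sum (fun i (a : ZMod p) => ((q a : ℝ) : ℂ) * E ((ξ * w i) * a))]
          rfl
  have hsplit : ∑ ξ : ZMod p, E (-(ξ * r)) * ∏ i, eloPhi p q (ξ * w i)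
      = 1 + ∑ ξ ∈ F, E (-(ξ * r)) * ∏ i, eloPhi p q (ξ * w i) := by
    rw [hF, ← Finset.add_sum_erase _ _ (Finset.mem_univ (0 : ZMod p))]
    congr 1
    simp [hφ0]
  have hdiff : ((S - 1/p : ℝ) : ℂ)
      = (1/p) * ∑ ξ ∈ F, E (-(ξ * r)) * ∏ i, eloPhi p q (ξ * w i) := by
    rw [Complex.ofReal_sub, hSC, hsplit, mul_add, mul_one]
    push_cast
    ring
  have habs : |S - 1/p| ≤ (1/p) * ∑ ξ ∈ F, ∏ i, ‖eloPhi p q (ξ * w i)‖ := by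
    have h1 : |S - 1/p| = ‖((S - 1/p : ℝ) : ℂ)‖ := by rw [Complex.norm_real, Real.norm_eq_abs]
    rw [h1, hdiff, norm_mul]
    have h2 : ‖(1:ℂ)/(p:ℂ)‖ = 1/(p:ℝ) := by
      rw [norm_div, norm_one, Complex.norm_natCast]
    rw [h2]
    refine mul_le_mul_of_nonneg_left ?_ (by positivity)
    refine le_trans (norm_sum_le _ _) ?_
    refine Finset.sum_le_sum fun ξ _ => ?_
    rw [norm_mul, norm_prod]
    have h3 : ‖E (-(ξ * r))‖ = 1 := by
      rw [hE, ZMod.stdAddChar_apply, Circle.norm_coe]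
    rw [h3, one_mul]
  obtain ⟨T', hT'sub, hT'card⟩ := Finset.exists_subset_card_eq (le_trans h2m hw)
  set Q := ∑ cd ∈ Finset.univ.offDiag, q cd.1 * q cd.2 with hQdef
  have hQ0 : 0 < Q := elo_Q_pos p q hq0 hq1 α hα0 hqb
  set G := ∑ s ∈ F, Real.exp (-(8 * (m:ℝ) * α) * eloPsi p s ^ 2) with hG
  have hsumξ : ∀ i, w i ≠ 0 →
      ∑ ξ ∈ F, ‖eloPhi p q (ξ * w i)‖ ^ (2 * m) ≤ G := by
    intro i hwi
    have hstep : ∀ ξ : ZMod p, ‖eloPhi p q (ξ * w i)‖ ^ (2*m)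
        ≤ ∑ ab ∈ Finset.univ.offDiag, (q ab.1 * q ab.2 / Q)
            * Real.exp (-(8 * (m:ℝ) * α) * eloPsi p (ξ * (w i * (ab.1 - ab.2))) ^ 2) := by
      intro ξ
      have h := elo_phi_pow_le p q hq0 hq1 α hα0 hqb m (ξ * w i)
      refine h.trans (le_of_eq ?_)
      refine Finset.sum_congr rfl fun ab _ => ?_
      rw [mul_assoc ξ (w i) (ab.1 - ab.2)]
    calc ∑ ξ ∈ F, ‖eloPhi p q (ξ * w i)‖ ^ (2 * m)
        ≤ ∑ ξ ∈ F, ∑ ab ∈ Finset.univ.offDiag, (q ab.1 * q ab.2 / Q)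
            * Real.exp (-(8 * (m:ℝ) * α) * eloPsi p (ξ * (w i * (ab.1 - ab.2))) ^ 2) :=
          Finset.sum_le_sum fun ξ _ => hstep ξ
      _ = ∑ ab ∈ Finset.univ.offDiag, ∑ ξ ∈ F, (q ab.1 * q ab.2 / Q)
            * Real.exp (-(8 * (m:ℝ) * α) * eloPsi p (ξ * (w i * (ab.1 - ab.2))) ^ 2) :=
          Finset.sum_comm
      _ = ∑ ab ∈ Finset.univ.offDiag, (q ab.1 * q ab.2 / Q) * G := by
          refine Finset.sum_congr rfl fun ab hab => ?_
          rw [← Finset.mul_sum]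
          congr 1
          have hab' : ab.1 ≠ ab.2 := (Finset.mem_offDiag.1 hab).2.2
          have hc : w i * (ab.1 - ab.2) ≠ 0 := mul_ne_zero hwi (sub_ne_zero.2 hab')
          rw [hG, hF]
          exact elo_sum_units p (fun s => Real.exp (-(8 * (m:ℝ) * α) * eloPsi p s ^ 2)) _ hc
      _ = G := by
          rw [← Finset.sum_mul, ← Finset.sum_div, ← hQdef, div_self hQ0.ne', one_mul]
  have hprodle : ∀ ξ ∈ F, ∏ i, ‖eloPhi p q (ξ * w i)‖
      ≤ (∑ i ∈ T', ‖eloPhi p q (ξ * w i)‖ ^ (2 * m)) / (2 * m) := by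
    intro ξ _
    have hsplit2 := Finset.prod_sdiff (Finset.subset_univ T')
      (f := fun i => ‖eloPhi p q (ξ * w i)‖)
    have hrest : ∏ i ∈ Finset.univ \ T', ‖eloPhi p q (ξ * w i)‖ ≤ 1 :=
      Finset.prod_le_one (fun i _ => norm_nonneg _)
        (fun i _ => elo_abs_phi_le_one p q hq0 hq1 _)
    have hTnn : 0 ≤ ∏ i ∈ T', ‖eloPhi p q (ξ * w i)‖ :=
      Finset.prod_nonneg fun i _ => norm_nonneg _
    have h1 : ∏ i, ‖eloPhi p q (ξ * w i)‖
        ≤ ∏ i ∈ T', ‖eloPhi p q (ξ * w i)‖ := by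
      rw [← hsplit2]
      exact mul_le_of_le_one_left hTnn hrest
    refine h1.trans ?_
    have h2 := elo_amgm (2 * m) (by omega) T' hT'card
      (fun i => ‖eloPhi p q (ξ * w i)‖) (fun i _ => norm_nonneg _)
    refine h2.trans (le_of_eq ?_)
    congr 1
    push_cast
    ring
  have hT : ∑ ξ ∈ F, ∏ i, ‖eloPhi p q (ξ * w i)‖ ≤ G := by
    calc ∑ ξ ∈ F, ∏ i, ‖eloPhi p q (ξ * w i)‖
        ≤ ∑ ξ ∈ F, (∑ i ∈ T', ‖eloPhi p q (ξ * w i)‖ ^ (2 * m)) / (2 * m) :=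
          Finset.sum_le_sum hprodle
      _ = (∑ i ∈ T', ∑ ξ ∈ F, ‖eloPhi p q (ξ * w i)‖ ^ (2 * m)) / (2 * m) := by
          rw [← Finset.sum_div]
          congr 1
          exact Finset.sum_comm
      _ ≤ (∑ _i ∈ T', G) / (2 * m) := by
          refine (div_le_div_iff_of_pos_right hmR).2 ?_
          exact Finset.sum_le_sum fun i hi => hsumξ i ((Finset.mem_filter.1 (hT'sub hi)).2)
      _ = G := by
          rw [Finset.sum_const, hT'card, nsmul_eq_mul]
          push_cast
          field_simp
  have hβ : (0:ℝ) < 8 * (m:ℝ) * α := by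
    have : (0:ℝ) < 8 * (m:ℝ) := by linarith
    exact mul_pos this hα0
  have hGle : G ≤ Real.sqrt (π / ((8 * (m:ℝ) * α) / (p:ℝ)^2)) := by
    rw [hG, hF]
    exact elo_G_le p _ hβ
  have heq : (1/(p:ℝ)) * Real.sqrt (π / ((8 * (m:ℝ) * α) / (p:ℝ)^2))
      = Real.sqrt (π / (8 * (m:ℝ) * α)) := by
    have h1 : π / ((8 * (m:ℝ) * α) / (p:ℝ)^2) = (π / (8 * (m:ℝ) * α)) * (p:ℝ)^2 := by
      field_simp
    rw [h1, Real.sqrt_mul (by positivity) ((p:ℝ)^2), Real.sqrt_sq hppos.le]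
    field_simp
  have hfinal : Real.sqrt (π / (8 * (m:ℝ) * α)) ≤ 2 / Real.sqrt (α * n') := by
    have hn'R : (0:ℝ) < n' := by exact_mod_cast (by omega : 0 < n')
    have h8mR : 3 * (n':ℝ) ≤ 8 * (m:ℝ) := by exact_mod_cast h3
    have hle : π / (8 * (m:ℝ) * α) ≤ 4 / (α * n') := by
      rw [div_le_div_iff₀ hβ (by positivity)]
      have hπ4 := Real.pi_le_four
      have hπ0 := Real.pi_pos
      nlinarith [mul_nonneg (sub_nonneg.2 hπ4) (mul_pos hα0 hn'R).le,
        mul_nonneg hα0.le (sub_nonneg.2 h8mR)]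
    refine (Real.sqrt_le_sqrt hle).trans ?_
    rw [Real.sqrt_div (by norm_num : (0:ℝ) ≤ 4)]
    rw [show (4:ℝ) = 2^2 by norm_num, Real.sqrt_sq (by norm_num : (0:ℝ) ≤ 2)]
  refine habs.trans ?_
  calc (1/(p:ℝ)) * ∑ ξ ∈ F, ∏ i, ‖eloPhi p q (ξ * w i)‖
      ≤ (1/(p:ℝ)) * G := mul_le_mul_of_nonneg_left hT (by positivity)
    _ ≤ (1/(p:ℝ)) * Real.sqrt (π / ((8 * (m:ℝ) * α) / (p:ℝ)^2)) :=
        mul_le_mul_of_nonneg_left hGle (by positivity)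
    _ = Real.sqrt (π / (8 * (m:ℝ) * α)) := heq
    _ ≤ 2 / Real.sqrt (α * n') := hfinal


/-- Forward Erdős–Littlewood–Offord mod `p`: if `X ∈ (ℤ/pℤ)^n` has i.i.d. `α`-balanced
entries and `w` has at least `n'` non-zero coordinates with `α ≥ 4/n'`, then for every `r`,
`|P(X·w = r) - 1/p| ≤ 2/√(αn')`. -/
theorem forward_erdos_littlewood_offord {Ω : Type*} [MeasureSpace Ω]
    [IsProbabilityMeasure (ℙ : Measure Ω)]
    (p : ℕ) [Fact p.Prime]
    [MeasurableSpace (ZMod p)] [MeasurableSingletonClass (ZMod p)]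
    (n n' : ℕ) (hn' : 0 < n') (hn'n : n' ≤ n)
    (α : ℝ) (hα0 : 0 < α) (hα1 : α ≤ 1) (hαn' : 4 / (n' : ℝ) ≤ α)
    (X : Ω → Fin n → ZMod p)
    (hmeas : ∀ i, Measurable fun ω => X ω i)
    (hindep : iIndepFun (fun i ω => X ω i) ℙ)
    (hident : ∀ i j, Measure.map (fun ω => X ω i) ℙ = Measure.map (fun ω => X ω j) ℙ)
    (hbal : ∀ i (r : ZMod p), ℙ {ω | X ω i = r} ≤ ENNReal.ofReal (1 - α))
    (w : Fin n → ZMod p) (hw : n' ≤ Set.ncard {i | w i ≠ 0}) :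
    ∀ r : ZMod p, |(ℙ {ω | ∑ i, X ω i * w i = r}).toReal - 1 / p|
      ≤ 2 / Real.sqrt (α * n') := by
  classical
  intro r
  have hn'R : (0:ℝ) < n' := by exact_mod_cast hn'
  have hn'4 : 4 ≤ n' := by
    have h1 : (4:ℝ) / n' ≤ 1 := le_trans hαn' hα1
    have h2 : (4:ℝ) ≤ n' := by rwa [div_le_one hn'R] at h1
    exact_mod_cast h2
  have hn0 : 0 < n := lt_of_lt_of_le hn' hn'n
  set i₀ : Fin n := ⟨0, hn0⟩ with hi₀
  set q : ZMod p → ℝ := fun a => (ℙ ((fun ω => X ω i₀) ⁻¹' {a})).toReal with hq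
  -- identical distribution transfer
  have hpre : ∀ (i : Fin n) (a : ZMod p),
      ℙ ((fun ω => X ω i) ⁻¹' {a}) = ℙ ((fun ω => X ω i₀) ⁻¹' {a}) := by
    intro i a
    have h1 := hident i i₀
    have h2 : Measure.map (fun ω => X ω i) ℙ {a} = Measure.map (fun ω => X ω i₀) ℙ {a} := by
      rw [h1]
    rwa [Measure.map_apply (hmeas i) (measurableSet_singleton a),
      Measure.map_apply (hmeas i₀) (measurableSet_singleton a)] at h2
  have hq0 : ∀ a, 0 ≤ q a := fun a => ENNReal.toReal_nonneg
  have hq1 : ∑ a, q a = 1 := by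
    rw [hq]
    have h1 : ∑ a : ZMod p, ℙ ((fun ω => X ω i₀) ⁻¹' {a}) = 1 := by
      rw [sum_measure_preimage_singleton Finset.univ
        (fun a _ => (hmeas i₀) (measurableSet_singleton a))]
      have : (fun ω => X ω i₀) ⁻¹' ↑(Finset.univ : Finset (ZMod p)) = Set.univ := by
        simp
      rw [this, measure_univ]
    rw [← ENNReal.toReal_sum (fun a _ => measure_ne_top ℙ _), h1, ENNReal.toReal_one]
  have hqb : ∀ a, q a ≤ 1 - α := by
    intro a
    have h1 := hbal i₀ a
    have h2 : {ω | X ω i₀ = a} = (fun ω => X ω i₀) ⁻¹' {a} := rfl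
    rw [h2] at h1
    exact ENNReal.toReal_le_of_le_ofReal (by linarith) h1
  -- convert support hypothesis
  have hwcard : n' ≤ (Finset.univ.filter (fun i => w i ≠ 0)).card := by
    have h1 : {i | w i ≠ 0}.ncard = (Finset.univ.filter (fun i => w i ≠ 0)).card := by
      rw [Set.ncard_eq_toFinset_card' ]
      congr 1
      ext i
      simp
    omega
  -- main identity
  have hmain : (ℙ {ω | ∑ i, X ω i * w i = r}).toReal
      = ∑ v : Fin n → ZMod p, if ∑ i, v i * w i = r then ∏ i, q (v i) else 0 := by
    set V : Finset (Fin n → ZMod p) := Finset.univ.filter (fun v => ∑ i, v i * w i = r) with hV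
    have hset : {ω | ∑ i, X ω i * w i = r}
        = ⋃ v ∈ V, ⋂ i, (fun ω => X ω i) ⁻¹' {v i} := by
      ext ω
      simp only [Set.mem_setOf_eq, Set.mem_iUnion, Set.mem_iInter, Set.mem_preimage,
        Set.mem_singleton_iff, hV, Finset.mem_filter, Finset.mem_univ, true_and]
      constructor
      · intro h
        exact ⟨fun i => X ω i, h, fun i => rfl⟩
      · rintro ⟨v, hv, hvi⟩
        have : (fun i => X ω i) = v := funext hvi
        calc ∑ i, X ω i * w i = ∑ i, v i * w i := by
              refine Finset.sum_congr rfl fun i _ => by rw [hvi i]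
          _ = r := hv
    have hmble : ∀ v : Fin n → ZMod p, MeasurableSet (⋂ i, (fun ω => X ω i) ⁻¹' {v i}) :=
      fun v => MeasurableSet.iInter fun i => (hmeas i) (measurableSet_singleton _)
    have hdisj : (↑V : Set (Fin n → ZMod p)).PairwiseDisjoint
        (fun v => ⋂ i, (fun ω => X ω i) ⁻¹' {v i}) := by
      intro v _ v' _ hvv'
      refine Set.disjoint_left.2 fun ω hω hω' => hvv' ?_
      simp only [Set.mem_iInter, Set.mem_preimage, Set.mem_singleton_iff] at hω hω'
      funext i
      rw [← hω i, ← hω' i]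
    have hprod : ∀ v : Fin n → ZMod p,
        ℙ (⋂ i, (fun ω => X ω i) ⁻¹' {v i}) = ∏ i, ℙ ((fun ω => X ω i) ⁻¹' {v i}) := by
      intro v
      exact hindep.meas_iInter fun i => ⟨{v i}, measurableSet_singleton _, rfl⟩
    rw [hset, measure_biUnion_finset hdisj (fun v _ => hmble v)]
    rw [ENNReal.toReal_sum (fun v _ => measure_ne_top ℙ _)]
    have hterm : ∀ v : Fin n → ZMod p,
        (ℙ (⋂ i, (fun ω => X ω i) ⁻¹' {v i})).toReal = ∏ i, q (v i) := by
      intro v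
      rw [hprod v, ENNReal.toReal_prod]
      exact Finset.prod_congr rfl fun i _ => by rw [hq, hpre i (v i)]
    rw [Finset.sum_congr rfl fun v _ => hterm v, hV, Finset.sum_filter]
  rw [hmain]
  exact elo_key p q hq0 hq1 α hα0 hqb n n' hn'4 w hwcard r
end
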